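/- arXiv:1507.07191 — 9 statements merged into one kernel-verified Lean document; each statement's English description precedes it below -/
import Mathlib

section
/- Let X be an integrable real-valued random variable on a probability space, with nonatomic distribution, satisfying L ≤ X ≤ R almost surely, and set μ_a = E[X]. Let μ_b be a real number with μ_b < μ_a and P(X < μ_b) > 0, and let D_0 = {X < μ_b}. Then there exist an integer K ≥ 2 and real numbers μ_b = y_0 ≤ y_1 ≤ … ≤ y_{K-1} ≤ R such that, setting D_k = {y_{k-1} ≤ X < y_k} for 1 ≤ k ≤ K−1 and D_K = {X ≥ y_{K-1}}, one has P(D_k) > 0 for every 1 ≤ k ≤ K−1, E[X | D_0 ∪ D_k] = μ_b for every 1 ≤ k ≤ K−1, and E[X | D_0 ∪ D_K] ≤ μ_b. -/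
open MeasureTheory Set Filter

/-- Conditional expectation of `X` given the event `A`: `E[X·1_A] / P(A)`. -/
noncomputable def condExpSet {Ω : Type*} [MeasurableSpace Ω] (P : Measure Ω)
    (X : Ω → ℝ) (A : Set Ω) : ℝ :=
  (∫ ω in A, X ω ∂P) / (P A).toReal

lemma phi_cont {Ω : Type*} [MeasurableSpace Ω] (P : Measure Ω) [IsProbabilityMeasure P]
    (X : Ω → ℝ) (hXm : Measurable X) (hXi : Integrable X P)
    (hna : ∀ r : ℝ, P (X ⁻¹' {r}) = 0) (c : ℝ) :
    Continuous (fun t => ∫ ω in {ω | X ω < t}, (X ω - c) ∂P) := by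
  have hgi : Integrable (fun ω => X ω - c) P := hXi.sub (integrable_const c)
  have hmeas : ∀ t : ℝ, MeasurableSet {ω | X ω < t} := fun t =>
    measurableSet_lt hXm measurable_const
  have key : ∀ t : ℝ, (∫ ω in {ω | X ω < t}, (X ω - c) ∂P)
      = ∫ ω, ({ω | X ω < t}).indicator (fun ω => X ω - c) ω ∂P := by
    intro t; rw [integral_indicator (hmeas t)]
  rw [continuous_iff_continuousAt]
  intro t0
  unfold ContinuousAt
  simp only [key]
  apply tendsto_integral_filter_of_dominated_convergence (fun ω => |X ω - c|)
  · exact Filter.Eventually.of_forall fun t =>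
      ((hXm.sub measurable_const).indicator (hmeas t)).aestronglyMeasurable
  · refine Filter.Eventually.of_forall fun t => Filter.Eventually.of_forall fun ω => ?_
    simpa [Real.norm_eq_abs] using norm_indicator_le_norm_self
      (f := fun ω => X ω - c) (a := ω) (s := {ω | X ω < t})
  · exact hgi.abs
  · have hne : ∀ᵐ ω ∂P, X ω ≠ t0 := by
      have := hna t0
      rw [ae_iff]
      simpa [Set.preimage, Set.mem_singleton_iff] using this
    filter_upwards [hne] with ω hω
    rcases lt_or_gt_of_ne hω with h | h
    · have hev : ∀ᶠ t in nhds t0, ({ω | X ω < t}).indicator (fun ω => X ω - c) ω = X ω - c := by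
        filter_upwards [eventually_gt_nhds h] with t ht
        simp [Set.indicator_of_mem, ht]
      rw [Set.indicator_of_mem (by exact h)]
      exact Tendsto.congr' (hev.mono fun t h => h.symm) tendsto_const_nhds
    · have hev : ∀ᶠ t in nhds t0, ({ω | X ω < t}).indicator (fun ω => X ω - c) ω = 0 := by
        filter_upwards [eventually_lt_nhds h] with t ht
        simp [Set.indicator_of_notMem, not_lt.mpr ht.le]
      rw [Set.indicator_of_notMem (by simp [not_lt.mpr (le_of_lt h)] : ω ∉ {ω | X ω < t0})]
      exact Tendsto.congr' (hev.mono fun t h => h.symm) tendsto_const_nhds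

/-- existence of the partition `{D_k}` of Lemma 1 (without the bound on `K`). -/
theorem exists_partition {Ω : Type*} [MeasurableSpace Ω] (P : Measure Ω)
    [IsProbabilityMeasure P] (X : Ω → ℝ) (hXm : Measurable X) (hXi : Integrable X P)
    (hna : ∀ r : ℝ, P (X ⁻¹' {r}) = 0)
    (L R : ℝ) (hLR : L < R) (hbdd : ∀ᵐ ω ∂P, L ≤ X ω ∧ X ω ≤ R)
    (μa μb : ℝ) (hμa : μa = ∫ ω, X ω ∂P) (hμab : μb < μa)
    (hD0 : 0 < P {ω | X ω < μb}) :
    ∃ K : ℕ, 2 ≤ K ∧ ∃ y : ℕ → ℝ,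
      y 0 = μb ∧
      (∀ i, i + 1 ≤ K - 1 → y i ≤ y (i + 1)) ∧
      y (K - 1) ≤ R ∧
      (∀ k, 1 ≤ k → k ≤ K - 1 →
        0 < P {ω | y (k - 1) ≤ X ω ∧ X ω < y k} ∧
        condExpSet P X ({ω | X ω < μb} ∪ {ω | y (k - 1) ≤ X ω ∧ X ω < y k}) = μb) ∧
      condExpSet P X ({ω | X ω < μb} ∪ {ω | y (K - 1) ≤ X ω}) ≤ μb := by
  classical
  set g : Ω → ℝ := fun ω => X ω - μb with hg
  have hgi : Integrable g P := hXi.sub (integrable_const μb)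
  set Φ : ℝ → ℝ := fun t => ∫ ω in {ω | X ω < t}, g ω ∂P with hΦdef
  have hΦcont : Continuous Φ := phi_cont P X hXm hXi hna μb
  have hmeas : ∀ t : ℝ, MeasurableSet {ω | X ω < t} := fun t =>
    measurableSet_lt hXm measurable_const
  have hmeas2 : ∀ s t : ℝ, MeasurableSet {ω | s ≤ X ω ∧ X ω < t} := fun s t =>
    (measurableSet_le measurable_const hXm).inter (measurableSet_lt hXm measurable_const)
  have hmeas3 : ∀ s : ℝ, MeasurableSet {ω | s ≤ X ω} := fun s =>
    measurableSet_le measurable_const hXm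
  -- splitting of Φ
  have hsplit : ∀ s t : ℝ, s ≤ t →
      Φ t = Φ s + ∫ ω in {ω | s ≤ X ω ∧ X ω < t}, g ω ∂P := by
    intro s t hst
    have hset : {ω | X ω < s} ∪ {ω | s ≤ X ω ∧ X ω < t} = {ω | X ω < t} := by
      ext ω
      simp only [Set.mem_union, Set.mem_setOf_eq]
      constructor
      · rintro (h | ⟨h1, h2⟩)
        · exact lt_of_lt_of_le h hst
        · exact h2
      · intro h
        rcases lt_or_ge (X ω) s with h' | h'
        · exact Or.inl h'
        · exact Or.inr ⟨h', h⟩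
    have hdisj : Disjoint {ω | X ω < s} {ω | s ≤ X ω ∧ X ω < t} := by
      rw [Set.disjoint_left]
      rintro ω h ⟨h1, _⟩
      exact absurd h1 (not_le.mpr h)
    show (∫ ω in {ω | X ω < t}, g ω ∂P) = _
    rw [← hset, setIntegral_union hdisj (hmeas2 s t) hgi.integrableOn hgi.integrableOn]
  have hmono : ∀ s t : ℝ, μb ≤ s → s ≤ t → Φ s ≤ Φ t := by
    intro s t hμs hst
    have h0 : 0 ≤ ∫ ω in {ω | s ≤ X ω ∧ X ω < t}, g ω ∂P := by
      refine setIntegral_nonneg (hmeas2 s t) fun ω hω => ?_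
      have h1 : s ≤ X ω := hω.1
      simp only [hg]
      linarith
    have := hsplit s t hst
    linarith
  set δ : ℝ := -Φ μb with hδdef
  have hΦμb : Φ μb = -δ := by rw [hδdef, neg_neg]
  have hδpos : 0 < δ := by
    have h1 : 0 < ∫ ω in {ω | X ω < μb}, (μb - X ω) ∂P := by
      rw [setIntegral_pos_iff_support_of_nonneg_ae]
      · refine lt_of_lt_of_le hD0 (measure_mono fun ω hω => ?_)
        refine ⟨?_, hω⟩
        have : X ω < μb := hω
        simp only [Function.mem_support]
        intro hc
        linarith
      · rw [Filter.EventuallyLE, ae_restrict_iff' (hmeas μb)]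
        refine Filter.Eventually.of_forall fun ω hω => ?_
        have : X ω < μb := hω
        simp only [Pi.zero_apply]
        linarith
      · exact ((integrable_const μb).sub hXi).integrableOn
    have h2 : Φ μb = -∫ ω in {ω | X ω < μb}, (μb - X ω) ∂P := by
      rw [← integral_neg]
      refine integral_congr_ae (Filter.Eventually.of_forall fun ω => ?_)
      simp [hg]
    rw [hδdef, h2, neg_neg]
    exact h1
  have hXleR : ∀ᵐ ω ∂P, X ω ≤ R := hbdd.mono fun ω h => h.2
  have hμaR : μa ≤ R := by
    rw [hμa]
    calc ∫ ω, X ω ∂P ≤ ∫ _, R ∂P := integral_mono_ae hXi (integrable_const R) hXleR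
    _ = R := by simp
  have hμbR : μb < R := lt_of_lt_of_le hμab hμaR
  have htot : ∫ ω, g ω ∂P = μa - μb := by
    have : ∫ ω, g ω ∂P = (∫ ω, X ω ∂P) - ∫ _, μb ∂P :=
      integral_sub hXi (integrable_const μb)
    rw [this]
    simp [hμa]
  have hnullint : ∀ s : Set Ω, P s = 0 → ∫ ω in s, g ω ∂P = 0 := by
    intro s hs
    rw [Measure.restrict_eq_zero.mpr hs]
    exact integral_zero_measure _
  have hcomplset : ∀ c : ℝ, {ω | X ω < c}ᶜ = {ω | c ≤ X ω} := by
    intro c; ext ω; simp [not_lt]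
  have hcompl_null : P ({ω | X ω < R}ᶜ) = 0 := by
    have h1 : {ω | X ω < R}ᶜ ⊆ {ω | X ω = R} ∪ {ω | ¬ X ω ≤ R} := by
      intro ω hω
      simp only [Set.mem_compl_iff, Set.mem_setOf_eq, not_lt] at hω
      rcases eq_or_lt_of_le hω with h | h
      · exact Or.inl h.symm
      · exact Or.inr (not_le.mpr h)
    refine measure_mono_null h1 (measure_union_null ?_ ?_)
    · simpa [Set.preimage] using hna R
    · exact ae_iff.mp hXleR
  have hΦR : Φ R = μa - μb := by
    have h1 : (∫ ω in {ω | X ω < R}, g ω ∂P) + ∫ ω in {ω | X ω < R}ᶜ, g ω ∂P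
        = ∫ ω, g ω ∂P := integral_add_compl (hmeas R) hgi
    have h0 : ∫ ω in {ω | X ω < R}ᶜ, g ω ∂P = 0 := hnullint _ hcompl_null
    rw [h0, add_zero] at h1
    show (∫ ω in {ω | X ω < R}, g ω ∂P) = μa - μb
    rw [h1, htot]
  have hΦRpos : 0 < Φ R := by rw [hΦR]; linarith
  have hΦμbR : Φ μb ≤ Φ R := hmono μb R le_rfl hμbR.le
  set v : ℕ → ℝ := fun k => min (Φ μb + k * δ) (Φ R) with hv
  have hvmem : ∀ k : ℕ, v k ∈ Set.Icc (Φ μb) (Φ R) := by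
    intro k
    refine ⟨le_min ?_ hΦμbR, min_le_right _ _⟩
    have : (0:ℝ) ≤ k * δ := mul_nonneg (Nat.cast_nonneg k) hδpos.le
    linarith
  set S : ℕ → Set ℝ := fun k => Set.Icc μb R ∩ Φ ⁻¹' {v k} with hS
  have hSne : ∀ k, (S k).Nonempty := by
    intro k
    obtain ⟨t, ht, hΦt⟩ := intermediate_value_Icc hμbR.le hΦcont.continuousOn (hvmem k)
    exact ⟨t, ht, hΦt⟩
  have hSclosed : ∀ k, IsClosed (S k) := fun k =>
    isClosed_Icc.inter (isClosed_singleton.preimage hΦcont)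
  have hSbdd : ∀ k, BddBelow (S k) := fun k => ⟨μb, fun t ht => ht.1.1⟩
  set y : ℕ → ℝ := fun k => sInf (S k) with hy
  have hymem : ∀ k, y k ∈ S k := fun k => (hSclosed k).csInf_mem (hSne k) (hSbdd k)
  have hyIcc : ∀ k, y k ∈ Set.Icc μb R := fun k => (hymem k).1
  have hyv : ∀ k, Φ (y k) = v k := fun k => (hymem k).2
  -- the number of pieces
  have hex : ∃ n : ℕ, Φ R ≤ (n + 1) * δ := by
    obtain ⟨n, hn⟩ := exists_nat_ge (Φ R / δ)
    refine ⟨n, ?_⟩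
    rw [div_le_iff₀ hδpos] at hn
    nlinarith
  set m : ℕ := Nat.find hex with hm
  have hmspec : Φ R ≤ ((m : ℝ) + 1) * δ := Nat.find_spec hex
  have hmlow : (m : ℝ) * δ ≤ Φ R := by
    rcases Nat.eq_zero_or_pos m with h0 | h0
    · rw [h0]; push_cast; linarith
    · have hmin := Nat.find_min hex (show m - 1 < m from Nat.sub_lt h0 one_pos)
      push_neg at hmin
      have h1 : ((m - 1 : ℕ) : ℝ) + 1 = (m : ℝ) := by
        have := Nat.succ_pred_eq_of_pos h0
        exact_mod_cast congrArg (Nat.cast (R := ℝ)) this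
      rw [h1] at hmin
      linarith
  have hvk : ∀ k : ℕ, k ≤ m + 1 → Φ (y k) = Φ μb + k * δ := by
    intro k hk
    have hk' : (k : ℝ) ≤ (m : ℝ) + 1 := by exact_mod_cast hk
    have hle : Φ μb + k * δ ≤ Φ R := by
      nlinarith [mul_nonneg (sub_nonneg.mpr (by linarith : (k:ℝ) ≤ (m:ℝ)+1)) hδpos.le]
    rw [hyv k, hv]
    exact min_eq_left hle
  have hy0 : y 0 = μb := by
    have hmem : μb ∈ S 0 := by
      refine ⟨⟨le_rfl, hμbR.le⟩, ?_⟩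
      simp only [Set.mem_preimage, Set.mem_singleton_iff, hv]
      push_cast
      rw [zero_mul, add_zero]
      exact (min_eq_left hΦμbR).symm
    exact le_antisymm (csInf_le (hSbdd 0) hmem) (le_csInf (hSne 0) fun t ht => ht.1.1)
  have hymono : ∀ j : ℕ, j + 1 ≤ m + 1 → y j ≤ y (j + 1) := by
    intro j hj
    by_contra hlt
    push_neg at hlt
    have h1 : Φ (y (j + 1)) ≤ Φ (y j) := hmono _ _ (hyIcc (j+1)).1 hlt.le
    rw [hvk j (by omega), hvk (j+1) hj] at h1
    push_cast at h1
    nlinarith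
  -- integral of X in terms of g
  have hXg : ∀ A : Set Ω,
      ∫ ω in A, X ω ∂P = (∫ ω in A, g ω ∂P) + μb * (P A).toReal := by
    intro A
    have e1 : ∫ ω in A, X ω ∂P = ∫ ω in A, (g ω + μb) ∂P := by
      refine integral_congr_ae (Filter.Eventually.of_forall fun ω => ?_)
      simp [hg]
    rw [e1, integral_add hgi.integrableOn
      (integrableOn_const (measure_ne_top P A))]
    rw [setIntegral_const]
    simp [mul_comm, Measure.real]
  have hPA : ∀ B : Set Ω, 0 < P ({ω | X ω < μb} ∪ B) := fun B =>
    lt_of_lt_of_le hD0 (measure_mono Set.subset_union_left)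
  have hPAt : ∀ B : Set Ω, 0 < (P ({ω | X ω < μb} ∪ B)).toReal := fun B =>
    ENNReal.toReal_pos (ne_of_gt (hPA B)) (measure_ne_top P _)
  have hcond_eq : ∀ B : Set Ω, (∫ ω in ({ω | X ω < μb} ∪ B), g ω ∂P) = 0 →
      condExpSet P X ({ω | X ω < μb} ∪ B) = μb := by
    intro B h0
    unfold condExpSet
    rw [hXg, h0, zero_add, mul_div_assoc, div_self (ne_of_gt (hPAt B)), mul_one]
  have hcond_le : ∀ B : Set Ω, (∫ ω in ({ω | X ω < μb} ∪ B), g ω ∂P) ≤ 0 →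
      condExpSet P X ({ω | X ω < μb} ∪ B) ≤ μb := by
    intro B h0
    unfold condExpSet
    rw [hXg, div_le_iff₀ (hPAt B)]
    nlinarith [hPAt B]
  refine ⟨m + 2, by omega, y, hy0, ?_, ?_, ?_, ?_⟩
  · intro i hi
    exact hymono i hi
  · exact (hyIcc (m + 1)).2
  · -- intermediate pieces
    intro k hk1 hk2
    obtain ⟨j, rfl⟩ : ∃ j, k = j + 1 := ⟨k - 1, (Nat.succ_pred_eq_of_pos hk1).symm⟩
    have hk2' : j + 1 ≤ m + 1 := hk2
    have haμb : μb ≤ y j := (hyIcc j).1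
    have hab : y j ≤ y (j + 1) := hymono j hk2'
    have hDkint : ∫ ω in {ω | y j ≤ X ω ∧ X ω < y (j + 1)}, g ω ∂P = δ := by
      have := hsplit (y j) (y (j+1)) hab
      rw [hvk j (by omega), hvk (j+1) hk2'] at this
      push_cast at this
      linarith
    have hsimp : (j + 1 - 1 : ℕ) = j := rfl
    rw [hsimp]
    have hPDk : 0 < P {ω | y j ≤ X ω ∧ X ω < y (j + 1)} := by
      by_contra h
      push_neg at h
      have h0 : P {ω | y j ≤ X ω ∧ X ω < y (j + 1)} = 0 :=
        le_antisymm h zero_le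
      have : ∫ ω in {ω | y j ≤ X ω ∧ X ω < y (j + 1)}, g ω ∂P = 0 := hnullint _ h0
      rw [hDkint] at this
      linarith
    refine ⟨hPDk, ?_⟩
    refine hcond_eq _ ?_
    have hdisj : Disjoint {ω | X ω < μb} {ω | y j ≤ X ω ∧ X ω < y (j + 1)} := by
      rw [Set.disjoint_left]
      rintro ω h ⟨h1, _⟩
      simp only [Set.mem_setOf_eq] at h
      linarith
    rw [setIntegral_union hdisj (hmeas2 _ _) hgi.integrableOn hgi.integrableOn]
    have : (∫ ω in {ω | X ω < μb}, g ω ∂P) = Φ μb := rfl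
    rw [this, hDkint, hΦμb]
    ring
  · -- final piece
    simp only [show m + 2 - 1 = m + 1 from rfl]
    refine hcond_le _ ?_
    have hdisj : Disjoint {ω | X ω < μb} {ω | y (m + 1) ≤ X ω} := by
      rw [Set.disjoint_left]
      intro ω h h2
      simp only [Set.mem_setOf_eq] at h h2
      have := (hyIcc (m+1)).1
      linarith
    rw [setIntegral_union hdisj (hmeas3 _) hgi.integrableOn hgi.integrableOn]
    have htail : ∫ ω in {ω | y (m + 1) ≤ X ω}, g ω ∂P = (μa - μb) - Φ (y (m + 1)) := by
      have h1 : (∫ ω in {ω | X ω < y (m+1)}, g ω ∂P)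
          + ∫ ω in {ω | X ω < y (m+1)}ᶜ, g ω ∂P = ∫ ω, g ω ∂P :=
        integral_add_compl (hmeas _) hgi
      rw [hcomplset, htot] at h1
      have h2 : (∫ ω in {ω | X ω < y (m+1)}, g ω ∂P) = Φ (y (m+1)) := rfl
      rw [h2] at h1
      linarith
    have hfirst : (∫ ω in {ω | X ω < μb}, g ω ∂P) = Φ μb := rfl
    rw [hfirst, htail, hvk (m+1) le_rfl, hΦμb]
    push_cast
    have : Φ R = μa - μb := hΦR
    nlinarith [hmspec]
end

section
/- Let X be an integrable real-valued random variable on a probability space with nonatomic distribution, L ≤ X ≤ R almost surely, μ_a = E[X], and let μ_b satisfy 0 ≤ μ_b < μ_a and P(X < μ_b) > 0, with D_0 = {X < μ_b}. Suppose K ≥ 2 is an integer and μ_b = y_0 ≤ y_1 ≤ … ≤ y_{K-1} ≤ R are reals such that, with D_k = {y_{k-1} ≤ X < y_k} for 1 ≤ k ≤ K−1 and D_K = {X ≥ y_{K-1}}, one has P(D_k) > 0 for 1 ≤ k ≤ K−1, E[X | D_0 ∪ D_k] = μ_b for 1 ≤ k ≤ K−1, and E[X | D_0 ∪ D_K] ≤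 μ_b. Then K ≤ (μ_a − μ_b/2) / (P(X ∈ D_0)·(μ_b − E[X | D_0])) + 2. -/
open MeasureTheory

/-- upper bound on the number `K` of cells of a partition as in Lemma 1. -/
theorem partition_upper_bound {Ω : Type*} [MeasurableSpace Ω] (P : Measure Ω)
    [IsProbabilityMeasure P] (X : Ω → ℝ) (hXm : Measurable X) (hXi : Integrable X P)
    (hna : ∀ r : ℝ, P (X ⁻¹' {r}) = 0)
    (L R : ℝ) (hLR : L < R) (hbdd : ∀ᵐ ω ∂P, L ≤ X ω ∧ X ω ≤ R)
    (μa μb : ℝ) (hμa : μa = ∫ ω, X ω ∂P) (hμb0 : 0 ≤ μb) (hμab : μb < μa)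
    (hD0 : 0 < P {ω | X ω < μb})
    (K : ℕ) (hK : 2 ≤ K) (y : ℕ → ℝ)
    (hy0 : y 0 = μb)
    (hmono : ∀ i, i + 1 ≤ K - 1 → y i ≤ y (i + 1))
    (hyR : y (K - 1) ≤ R)
    (hpos : ∀ k, 1 ≤ k → k ≤ K - 1 → 0 < P {ω | y (k - 1) ≤ X ω ∧ X ω < y k})
    (heq : ∀ k, 1 ≤ k → k ≤ K - 1 →
      condExpSet P X ({ω | X ω < μb} ∪ {ω | y (k - 1) ≤ X ω ∧ X ω < y k}) = μb)
    (hlast : condExpSet P X ({ω | X ω < μb} ∪ {ω | y (K - 1) ≤ X ω}) ≤ μb) :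
    (K : ℝ) ≤ (μa - μb / 2) /
        ((P {ω | X ω < μb}).toReal * (μb - condExpSet P X {ω | X ω < μb})) + 2 := by
  classical
  set D0 : Set Ω := {ω | X ω < μb} with hD0def
  have hD0m : MeasurableSet D0 := measurableSet_lt hXm measurable_const
  have hfin : ∀ A : Set Ω, P A ≠ ⊤ := fun A => measure_ne_top P A
  have hp0pos : 0 < (P D0).toReal := ENNReal.toReal_pos hD0.ne' (hfin D0)
  set e : Set Ω → ℝ := fun A => (∫ ω in A, X ω ∂P) - μb * (P A).toReal with hedef
  have hadd : ∀ A B : Set Ω, MeasurableSet B → Disjoint A B →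
      e (A ∪ B) = e A + e B := by
    intro A B hBm hAB
    simp only [hedef]
    rw [setIntegral_union hAB hBm hXi.integrableOn hXi.integrableOn,
      measure_union hAB hBm, ENNReal.toReal_add (hfin A) (hfin B)]
    ring
  set c : ℝ := - e D0 with hcdef
  -- c > 0
  have hIc : ∀ A : Set Ω, IntegrableOn (fun ω => μb - X ω) A P :=
    fun A => (integrableOn_const (measure_ne_top P A)).sub hXi.integrableOn
  have hc : 0 < c := by
    have hpos0 : 0 < ∫ ω in D0, (μb - X ω) ∂P := by
      rw [setIntegral_pos_iff_support_of_nonneg_ae _ (hIc D0)]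
      · refine lt_of_lt_of_le hD0 (measure_mono ?_)
        intro ω hω
        exact ⟨sub_ne_zero.2 (ne_of_gt (by exact hω)), hω⟩
      · filter_upwards [ae_restrict_mem hD0m] with ω hω
        exact sub_nonneg.2 (le_of_lt hω)
    have : (∫ ω in D0, (μb - X ω) ∂P) = μb * (P D0).toReal - ∫ ω in D0, X ω ∂P := by
      rw [integral_sub (integrableOn_const (C := μb) (measure_ne_top P D0))
        hXi.integrableOn, setIntegral_const, smul_eq_mul, measureReal_def]
      ring
    simp only [hcdef, hedef]
    linarith [hpos0, this ▸ hpos0]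
  -- chain: μb ≤ y i for i ≤ K - 1
  have hyμ : ∀ i, i ≤ K - 1 → μb ≤ y i := by
    intro i hi
    induction i with
    | zero => rw [hy0]
    | succ n ih =>
        exact le_trans (ih (le_trans (Nat.le_succ n) hi)) (hmono n hi)
  -- each middle cell has excess c
  have hDk : ∀ k, 1 ≤ k → k ≤ K - 1 →
      e {ω | y (k - 1) ≤ X ω ∧ X ω < y k} = c := by
    intro k hk1 hk2
    set Dk : Set Ω := {ω | y (k - 1) ≤ X ω ∧ X ω < y k} with hDkdef
    have hDkm : MeasurableSet Dk := by
      have : Dk = X ⁻¹' (Set.Ico (y (k-1)) (y k)) := rfl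
      rw [this]; exact hXm measurableSet_Ico
    have hdisj : Disjoint D0 Dk := by
      rw [Set.disjoint_left]
      intro ω h0 hk
      have : μb ≤ y (k - 1) := hyμ (k-1) (by omega)
      exact absurd (lt_of_lt_of_le h0 (le_trans this hk.1)) (not_lt.2 le_rfl)
    have hPU : (P (D0 ∪ Dk)).toReal ≠ 0 :=
      (ENNReal.toReal_pos (fun h => (measure_mono_null Set.subset_union_left h ▸ hD0).false)
        (hfin _)).ne'
    have h0 : e (D0 ∪ Dk) = 0 := by
      have := heq k hk1 hk2
      rw [condExpSet, div_eq_iff hPU] at this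
      simp only [hedef]
      rw [this]; ring
    have := hadd D0 Dk hDkm hdisj
    rw [h0] at this
    simp only [hcdef]
    linarith
  -- telescoping sum
  have hsplit : ∀ n, n + 1 ≤ K - 1 →
      {ω | y n ≤ X ω} = {ω | y n ≤ X ω ∧ X ω < y (n+1)} ∪ {ω | y (n+1) ≤ X ω} := by
    intro n hn
    ext ω
    simp only [Set.mem_setOf_eq, Set.mem_union]
    constructor
    · intro h
      rcases lt_or_ge (X ω) (y (n+1)) with h' | h'
      · exact Or.inl ⟨h, h'⟩
      · exact Or.inr h'
    · rintro (⟨h, _⟩ | h)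
      · exact h
      · exact le_trans (hmono n hn) h
  have hSm : ∀ n, MeasurableSet {ω | y n ≤ X ω} :=
    fun n => measurableSet_le measurable_const hXm
  have hsum : ∀ j, j ≤ K - 1 →
      e {ω | y 0 ≤ X ω} = j * c + e {ω | y j ≤ X ω} := by
    intro j hj
    induction j with
    | zero => simp
    | succ n ih =>
        have hn : n ≤ K - 1 := le_trans (Nat.le_succ n) hj
        rw [ih hn, hsplit n hj, hadd _ _ (hSm (n+1))
          (by rw [Set.disjoint_left]; rintro ω ⟨_, h1⟩ h2; exact absurd (lt_of_le_of_lt h2 h1) (lt_irrefl _))]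
        have hcell : e {ω | y n ≤ X ω ∧ X ω < y (n+1)} = c := by
          have := hDk (n+1) (by omega) hj
          simpa using this
        rw [hcell]
        push_cast
        ring
  -- last cell has nonnegative excess
  have hlastpos : 0 ≤ e {ω | y (K-1) ≤ X ω} := by
    simp only [hedef]
    have : μb * (P {ω | y (K-1) ≤ X ω}).toReal ≤ ∫ ω in {ω | y (K-1) ≤ X ω}, X ω ∂P := by
      have h1 : (∫ ω in {ω | y (K-1) ≤ X ω}, μb ∂P)
          = μb * (P {ω | y (K-1) ≤ X ω}).toReal := by
        rw [setIntegral_const, smul_eq_mul, measureReal_def]; ring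
      rw [← h1]
      refine setIntegral_mono_on (integrableOn_const (measure_ne_top P _))
        hXi.integrableOn (hSm (K-1)) ?_
      intro ω hω
      exact le_trans (hyμ (K-1) le_rfl) hω
    linarith
  -- total decomposition
  have huniv : (Set.univ : Set Ω) = D0 ∪ {ω | y 0 ≤ X ω} := by
    rw [hy0]
    ext ω
    simp only [Set.mem_univ, Set.mem_union, Set.mem_setOf_eq, true_iff]
    exact lt_or_ge (X ω) μb
  have heuniv : e Set.univ = μa - μb := by
    simp only [hedef]
    rw [setIntegral_univ, measure_univ, ENNReal.toReal_one, hμa]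
    ring
  have hdisj0 : Disjoint D0 {ω | y 0 ≤ X ω} := by
    rw [hy0, Set.disjoint_left]
    intro ω h1 h2
    exact absurd (show X ω < μb from h1) (not_lt.2 h2)
  have hdecomp : μa - μb = - c + ((K-1 : ℕ) * c + e {ω | y (K-1) ≤ X ω}) := by
    rw [← heuniv, huniv, hadd _ _ (hSm 0) hdisj0, ← hsum (K-1) le_rfl, hcdef]
    ring
  have hKcast : ((K - 1 : ℕ) : ℝ) = (K : ℝ) - 1 := by
    rw [Nat.cast_sub (by omega)]; simp
  have hmain : ((K : ℝ) - 2) * c ≤ μa - μb := by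
    rw [hdecomp, hKcast]
    nlinarith [hlastpos]
  -- identify c with the denominator in the goal
  have hcden : (P D0).toReal * (μb - condExpSet P X D0) = c := by
    rw [condExpSet]
    simp only [hcdef, hedef]
    field_simp
    ring
  rw [hcden]
  clear_value c
  have h1 : ((K : ℝ) - 2) * c ≤ μa - μb / 2 := le_trans hmain (by linarith)
  have hfinal : (K : ℝ) - 2 ≤ (μa - μb / 2) / c := (le_div_iff₀ hc).2 h1
  linarith [hfinal]
end

section
/- Let X be an integrable real-valued random variable on a probability space with nonatomic distribution, L ≤ X ≤ R almost surely, μ_a = E[X], and let μ_b satisfy μ_b < μ_a and P(X < μ_b) > 0, with D_0 = {X < μ_b}. Suppose K ≥ 2 is an integer and μ_b = y_0 ≤ y_1 ≤ … ≤ y_{K-1} ≤ R are reals such that, with D_k = {y_{k-1} ≤ X < y_k} for 1 ≤ k ≤ K−1 and D_K = {X ≥ y_{K-1}}, one has E[X | D_0 ∪ D_k] = μ_b for 1 ≤ k ≤ K−1 and E[X | D_0 ∪ D_K] ≤ μ_b. Then K ≥ (μ_a − μ_b) / (P(X ∈ D_0)·(μ_b − E[X | D_0])) + 1. -/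
open MeasureTheory

/-- lower bound on the number `K` of cells of a partition as in Lemma 1. -/
theorem partition_lower_bound {Ω : Type*} [MeasurableSpace Ω] (P : Measure Ω)
    [IsProbabilityMeasure P] (X : Ω → ℝ) (hXm : Measurable X) (hXi : Integrable X P)
    (hna : ∀ r : ℝ, P (X ⁻¹' {r}) = 0)
    (L R : ℝ) (hLR : L < R) (hbdd : ∀ᵐ ω ∂P, L ≤ X ω ∧ X ω ≤ R)
    (μa μb : ℝ) (hμa : μa = ∫ ω, X ω ∂P) (hμab : μb < μa)
    (hD0 : 0 < P {ω | X ω < μb})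
    (K : ℕ) (hK : 2 ≤ K) (y : ℕ → ℝ)
    (hy0 : y 0 = μb)
    (hmono : ∀ i, i + 1 ≤ K - 1 → y i ≤ y (i + 1))
    (hyR : y (K - 1) ≤ R)
    (heq : ∀ k, 1 ≤ k → k ≤ K - 1 →
      condExpSet P X ({ω | X ω < μb} ∪ {ω | y (k - 1) ≤ X ω ∧ X ω < y k}) = μb)
    (hlast : condExpSet P X ({ω | X ω < μb} ∪ {ω | y (K - 1) ≤ X ω}) ≤ μb) :
    (μa - μb) /
        ((P {ω | X ω < μb}).toReal * (μb - condExpSet P X {ω | X ω < μb})) + 1 ≤ (K : ℝ) := by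
  classical
  set D0 : Set Ω := {ω | X ω < μb} with hD0def
  have hmD0 : MeasurableSet D0 := measurableSet_lt hXm measurable_const
  have hg : Integrable (fun ω => X ω - μb) P := hXi.sub (integrable_const μb)
  -- monotonicity of y
  have hymono : ∀ i j : ℕ, i ≤ j → j ≤ K - 1 → y i ≤ y j := by
    intro i j hij hjK
    induction j with
    | zero => simp [Nat.le_zero.mp hij]
    | succ n ih =>
      rcases Nat.lt_or_ge i (n + 1) with h | h
      · exact le_trans (ih (Nat.lt_succ_iff.mp h) (le_trans (Nat.le_succ n) hjK))
          (hmono n hjK)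
      · have : i = n + 1 := le_antisymm hij h
        simp [this]
  -- the sets S k and the partial integrals f k
  set S : ℕ → Set Ω := fun k => {ω | X ω < y k} with hSdef
  have hmS : ∀ k, MeasurableSet (S k) := fun k => measurableSet_lt hXm measurable_const
  have hS0 : S 0 = D0 := by ext ω; simp [hSdef, hD0def, hy0]
  set f : ℕ → ℝ := fun k => ∫ ω in S k, (X ω - μb) ∂P with hfdef
  -- general fact about condExpSet
  have key : ∀ A : Set Ω, MeasurableSet A → 0 < P A →
      (∫ ω in A, (X ω - μb) ∂P) = (condExpSet P X A - μb) * (P A).toReal := by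
    intro A hmA hPA
    have hPAr : 0 < (P A).toReal :=
      ENNReal.toReal_pos hPA.ne' (measure_ne_top P A)
    have h1 : (∫ ω in A, (X ω - μb) ∂P) = (∫ ω in A, X ω ∂P) - μb * (P A).toReal := by
      rw [integral_sub hXi.integrableOn (integrable_const μb).integrableOn,
        setIntegral_const, smul_eq_mul]
      show _ - P.real A * μb = _ - μb * P.real A
      ring
    rw [h1, condExpSet, sub_mul, div_mul_cancel₀ _ hPAr.ne']
  have hPS0 : 0 < P (S 0) := by rw [hS0]; exact hD0
  -- recursion f k = f (k-1) - f 0 for 1 ≤ k ≤ K-1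
  have hrec : ∀ k : ℕ, 1 ≤ k → k ≤ K - 1 → f k = f (k - 1) - f 0 := by
    intro k hk1 hkK
    have hsub : S (k - 1) ⊆ S k := fun ω hω =>
      lt_of_lt_of_le hω (hymono (k - 1) k (Nat.sub_le k 1) hkK)
    have hDk : {ω | y (k - 1) ≤ X ω ∧ X ω < y k} = S k \ S (k - 1) := by
      ext ω; simp [hSdef, Set.mem_diff, and_comm, not_lt]
    have hsub0 : D0 ⊆ S (k - 1) := by
      rw [← hS0]; intro ω hω
      exact lt_of_lt_of_le hω (hymono 0 (k - 1) (Nat.zero_le _) (le_trans (Nat.sub_le k 1) hkK))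
    have hdisj : Disjoint D0 (S k \ S (k - 1)) :=
      Set.disjoint_left.mpr fun ω hω h2 => h2.2 (hsub0 hω)
    have hunion : (∫ ω in D0 ∪ (S k \ S (k - 1)), (X ω - μb) ∂P)
        = f 0 + (f k - f (k - 1)) := by
      rw [setIntegral_union hdisj ((hmS k).diff (hmS (k - 1))) hg.integrableOn hg.integrableOn,
        integral_diff (hmS (k - 1)) hg.integrableOn hsub]
      simp only [hfdef]
      rw [hS0]
    have hP : 0 < P (D0 ∪ (S k \ S (k - 1))) :=
      lt_of_lt_of_le hD0 (measure_mono Set.subset_union_left)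
    have h0 := key _ (hmD0.union ((hmS k).diff (hmS (k - 1)))) hP
    rw [hunion] at h0
    have hcc := heq k hk1 hkK
    rw [hDk] at hcc
    rw [hcc] at h0
    simp at h0
    linarith
  -- closed form
  have hclosed : ∀ k : ℕ, k ≤ K - 1 → f k = (1 - (k : ℝ)) * f 0 := by
    intro k hkK
    induction k with
    | zero => simp
    | succ n ih =>
      have h1 := hrec (n + 1) (Nat.le_add_left 1 n) hkK
      simp only [Nat.add_sub_cancel] at h1
      rw [h1, ih (le_trans (Nat.le_succ n) hkK)]
      push_cast; ring
  -- last cell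
  have hlastint : (∫ ω in D0 ∪ (S (K - 1))ᶜ, (X ω - μb) ∂P)
      = f 0 + ((μa - μb) - f (K - 1)) := by
    have hcompl : (∫ ω in (S (K - 1))ᶜ, (X ω - μb) ∂P)
        = (∫ ω, (X ω - μb) ∂P) - f (K - 1) := by
      have := integral_add_compl (hmS (K - 1)) hg
      linarith [this]
    have htot : (∫ ω, (X ω - μb) ∂P) = μa - μb := by
      rw [integral_sub hXi (integrable_const μb), integral_const]
      simp [hμa]
    have hsub0 : D0 ⊆ S (K - 1) := by
      rw [← hS0]; intro ω hω
      exact lt_of_lt_of_le hω (hymono 0 (K - 1) (Nat.zero_le _) le_rfl)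
    have hdisj : Disjoint D0 (S (K - 1))ᶜ :=
      Set.disjoint_left.mpr fun ω hω h2 => h2 (hsub0 hω)
    rw [setIntegral_union hdisj (hmS (K - 1)).compl hg.integrableOn hg.integrableOn,
      hcompl, htot]
    simp only [hfdef]
    rw [hS0]
  have hSc : {ω | y (K - 1) ≤ X ω} = (S (K - 1))ᶜ := by
    ext ω; simp [hSdef, not_lt]
  have hPlast : 0 < P (D0 ∪ (S (K - 1))ᶜ) :=
    lt_of_lt_of_le hD0 (measure_mono Set.subset_union_left)
  have hlast' : f 0 + ((μa - μb) - f (K - 1)) ≤ 0 := by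
    have h0 := key _ (hmD0.union (hmS (K - 1)).compl) hPlast
    rw [hlastint] at h0
    rw [hSc] at hlast
    have : (condExpSet P X (D0 ∪ (S (K - 1))ᶜ) - μb) * (P (D0 ∪ (S (K - 1))ᶜ)).toReal ≤ 0 :=
      mul_nonpos_of_nonpos_of_nonneg (by linarith) ENNReal.toReal_nonneg
    linarith
  -- f 0 < 0
  have hf0neg : f 0 < 0 := by
    have hpos : 0 < ∫ ω in D0, (μb - X ω) ∂P := by
      rw [setIntegral_pos_iff_support_of_nonneg_ae]
      · refine lt_of_lt_of_le hD0 (measure_mono ?_)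
        intro ω hω
        exact ⟨fun h => absurd (sub_eq_zero.mp h).symm (ne_of_lt hω), hω⟩
      · refine (ae_restrict_iff' hmD0).mpr (Filter.Eventually.of_forall fun ω hω => ?_)
        have : X ω < μb := hω
        simp only [Pi.zero_apply]
        linarith
      · exact ((integrable_const μb).sub hXi).integrableOn
    have : (∫ ω in D0, (μb - X ω) ∂P) = -f 0 := by
      rw [hfdef]; simp only [hS0]
      rw [← integral_neg]
      congr 1; ext ω; ring
    linarith
  -- identify denominator with -f 0
  have hdenom : (P D0).toReal * (μb - condExpSet P X D0) = -f 0 := by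
    have hPr : 0 < (P D0).toReal := ENNReal.toReal_pos hD0.ne' (measure_ne_top P D0)
    have h0 : f 0 = (condExpSet P X D0 - μb) * (P D0).toReal := by
      have := key D0 hmD0 hD0
      rw [hfdef]; simp only [hS0]; exact this
    rw [h0]; ring
  -- final arithmetic
  have hfK : f (K - 1) = (1 - ((K : ℝ) - 1)) * f 0 := by
    rw [hclosed (K - 1) le_rfl]
    congr 2
    rw [Nat.cast_sub (le_trans (by norm_num) hK)]
    norm_num
  have hineq : μa - μb ≤ ((K : ℝ) - 1) * (-f 0) := by
    rw [hfK] at hlast'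
    nlinarith
  rw [hdenom]
  have hK1 : (0 : ℝ) < (K : ℝ) - 1 := by
    have : (2 : ℝ) ≤ (K : ℝ) := by exact_mod_cast hK
    linarith
  have hfin : (μa - μb) / (-f 0) ≤ (K : ℝ) - 1 := by
    rw [div_le_iff₀ (by linarith : (0:ℝ) < -f 0)]
    linarith
  linarith
end

section
/- Let X be an integrable real-valued random variable on a probability space with nonatomic distribution, L ≤ X ≤ R almost surely, μ_a = E[X], and let μ_b satisfy μ_b < μ_a and P(X < μ_b) > 0. Then there exists a real number x₁ with μ_b < x₁ ≤ R such that E[X | X < x₁] = μ_b. -/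
open MeasureTheory Filter

/-- existence of a threshold `x₁` with `E[X | X < x₁] = μ_b`. -/
theorem exists_threshold {Ω : Type*} [MeasurableSpace Ω] (P : Measure Ω)
    [IsProbabilityMeasure P] (X : Ω → ℝ) (hXm : Measurable X) (hXi : Integrable X P)
    (hna : ∀ r : ℝ, P (X ⁻¹' {r}) = 0)
    (L R : ℝ) (hLR : L < R) (hbdd : ∀ᵐ ω ∂P, L ≤ X ω ∧ X ω ≤ R)
    (μa μb : ℝ) (hμa : μa = ∫ ω, X ω ∂P) (hμab : μb < μa)
    (hD0 : 0 < P {ω | X ω < μb}) :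
    ∃ x₁ : ℝ, μb < x₁ ∧ x₁ ≤ R ∧ condExpSet P X {ω | X ω < x₁} = μb := by
  unfold condExpSet
  set f : Ω → ℝ := fun ω => X ω - μb with hf
  have hfi : Integrable f P := hXi.sub (integrable_const μb)
  have hfm : Measurable f := hXm.sub measurable_const
  set F : ℝ → ℝ := fun x => ∫ ω in {ω | X ω < x}, f ω ∂P with hF
  have hms : ∀ x : ℝ, MeasurableSet {ω | X ω < x} := fun x => hXm measurableSet_Iio
  -- continuity
  have hcont : Continuous F := by
    rw [continuous_iff_continuousAt]
    intro x
    rw [ContinuousAt, tendsto_iff_seq_tendsto]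
    intro u hu
    have key : ∀ y : ℝ, F y = ∫ ω, Set.indicator {ω | X ω < y} f ω ∂P := by
      intro y; rw [integral_indicator (hms y)]
    simp only [Function.comp_def]
    simp only [key]
    apply tendsto_integral_of_dominated_convergence (fun ω => |f ω|)
    · intro n
      exact (hfm.indicator (hms (u n))).aestronglyMeasurable
    · exact hfi.abs
    · intro n
      filter_upwards with ω
      calc ‖Set.indicator {ω | X ω < u n} f ω‖ ≤ ‖f ω‖ := norm_indicator_le_norm_self f ω
        _ = |f ω| := rfl
    · have hnull : ∀ᵐ ω ∂P, X ω ≠ x := by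
        have := hna x
        rw [ae_iff]
        convert this using 2
        ext ω; simp [Set.mem_preimage]
      filter_upwards [hnull] with ω hω
      rcases lt_or_gt_of_ne hω with h | h
      · have hev : ∀ᶠ n in atTop, Set.indicator {ω' | X ω' < u n} f ω = f ω := by
          filter_upwards [hu.eventually (eventually_gt_nhds h)] with n hn
          exact Set.indicator_of_mem (show ω ∈ {ω' | X ω' < u n} from hn) f
        have : Set.indicator {ω' | X ω' < x} f ω = f ω := Set.indicator_of_mem (show ω ∈ {ω' | X ω' < x} from h) f
        rw [this]
        exact tendsto_const_nhds.congr' (hev.mono fun n hn => hn.symm)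
      · have hev : ∀ᶠ n in atTop, Set.indicator {ω' | X ω' < u n} f ω = 0 := by
          filter_upwards [hu.eventually (eventually_lt_nhds h)] with n hn
          exact Set.indicator_of_notMem (by simpa using not_lt.mpr hn.le) f
        have : Set.indicator {ω' | X ω' < x} f ω = 0 :=
          Set.indicator_of_notMem (by simpa using not_lt.mpr h.le) f
        rw [this]
        exact tendsto_const_nhds.congr' (hev.mono fun n hn => hn.symm)
  -- F μb < 0
  have hFμb : F μb < 0 := by
    have : 0 < ∫ ω in {ω | X ω < μb}, (μb - X ω) ∂P := by
      rw [setIntegral_pos_iff_support_of_nonneg_ae]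
      · refine lt_of_lt_of_le hD0 (measure_mono ?_)
        intro ω hω
        exact ⟨by simp [Function.support, sub_ne_zero]; exact fun h => absurd h (ne_of_gt hω), hω⟩
      · rw [EventuallyLE, ae_restrict_iff' (hms μb)]
        filter_upwards with ω hω
        simp only [Pi.zero_apply]
        linarith [hω]
      · exact ((integrable_const μb).sub hXi).integrableOn
    have heq : ∫ ω in {ω | X ω < μb}, (μb - X ω) ∂P = -(F μb) := by
      rw [hF]
      rw [← integral_neg]
      congr 1 with ω
      ring
    linarith [heq ▸ this]
  -- μb < R
  have hXleR : ∀ᵐ ω ∂P, X ω ≤ R := hbdd.mono fun ω h => h.2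
  have hμaR : μa ≤ R := by
    rw [hμa]
    calc ∫ ω, X ω ∂P ≤ ∫ _ω, R ∂P := integral_mono_ae hXi (integrable_const R) hXleR
      _ = R := by simp
  have hμbR : μb < R := lt_of_lt_of_le hμab hμaR
  -- F R = μa - μb > 0
  have haeR : ∀ᵐ ω ∂P, ω ∈ {ω | X ω < R} := by
    have h0 : ∀ᵐ ω ∂P, X ω ≠ R := by
      rw [ae_iff]
      convert hna R using 2
      ext ω; simp [Set.mem_preimage]
    filter_upwards [hXleR, h0] with ω h1 h2
    exact lt_of_le_of_ne h1 h2
  have hFR : F R = μa - μb := by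
    rw [hF]
    simp only
    rw [Measure.restrict_eq_self_of_ae_mem haeR]
    rw [integral_sub hXi (integrable_const μb)]
    simp [hμa]
  have hFRpos : 0 < F R := by rw [hFR]; linarith
  -- IVT
  obtain ⟨x₁, hx₁mem, hx₁⟩ : ∃ x₁ ∈ Set.Icc μb R, F x₁ = 0 := by
    have := intermediate_value_Icc hμbR.le hcont.continuousOn
    have h0 : (0:ℝ) ∈ Set.Icc (F μb) (F R) := ⟨hFμb.le, hFRpos.le⟩
    obtain ⟨x, hx, hfx⟩ := this h0
    exact ⟨x, hx, hfx⟩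
  have hx₁ne : x₁ ≠ μb := by
    intro h; rw [h] at hx₁; linarith
  have hμbx₁ : μb < x₁ := lt_of_le_of_ne hx₁mem.1 (Ne.symm hx₁ne)
  refine ⟨x₁, hμbx₁, hx₁mem.2, ?_⟩
  have hPpos : 0 < (P {ω | X ω < x₁}).toReal := by
    have hle : P {ω | X ω < μb} ≤ P {ω | X ω < x₁} :=
      measure_mono fun ω hω => lt_trans hω hμbx₁
    have h1 : 0 < P {ω | X ω < x₁} := lt_of_lt_of_le hD0 hle
    exact ENNReal.toReal_pos h1.ne' (measure_ne_top P _)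
  have hint : ∫ ω in {ω | X ω < x₁}, X ω ∂P = μb * (P {ω | X ω < x₁}).toReal := by
    have := hx₁
    rw [hF] at this
    simp only at this
    rw [integral_sub hXi.integrableOn (integrable_const μb).integrableOn] at this
    rw [setIntegral_const] at this
    simp only [Measure.real] at this
    have h2 : ∫ ω in {ω | X ω < x₁}, X ω ∂P = (P {ω | X ω < x₁}).toReal • μb := by linarith [this]
    rw [h2]; ring_nf
  rw [hint]
  field_simp
end

section
/- Let X be an integrable real-valued random variable on a probability space with X ≤ R almost surely for some real R > 0, let μ_b ≥ 0 be a real number, and let D_0 be an event with P(D_0) > 0 and E[X | D_0] < μ_b. If D_1, …, D_m are pairwise disjoint events, each disjoint from D_0, such that E[X | D_0 ∪ D_k] = μ_b for every 1 ≤ k ≤ m, then m ≤ R / (P(D_0)·(μ_b − E[X | D_0])). -/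
open MeasureTheory

/-- bound on the number of disjoint "balancing" events. -/
theorem number_of_cells_bound {Ω : Type*} [MeasurableSpace Ω] (P : Measure Ω)
    [IsProbabilityMeasure P] (X : Ω → ℝ) (hXi : Integrable X P)
    (R : ℝ) (hR : 0 < R) (hbdd : ∀ᵐ ω ∂P, X ω ≤ R)
    (μb : ℝ) (hμb : 0 ≤ μb)
    (D0 : Set Ω) (hD0m : MeasurableSet D0) (hD0 : 0 < P D0)
    (hlt : condExpSet P X D0 < μb)
    (m : ℕ) (D : Fin m → Set Ω) (hDm : ∀ k, MeasurableSet (D k))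
    (hdisj : Pairwise fun i j => Disjoint (D i) (D j))
    (hdisj0 : ∀ k, Disjoint D0 (D k))
    (heq : ∀ k, condExpSet P X (D0 ∪ D k) = μb) :
    (m : ℝ) ≤ R / ((P D0).toReal * (μb - condExpSet P X D0)) := by
  set p0 := (P D0).toReal with hp0def
  have hp0 : 0 < p0 := ENNReal.toReal_pos hD0.ne' (measure_ne_top P D0)
  set c := p0 * (μb - condExpSet P X D0) with hcdef
  have hc : 0 < c := mul_pos hp0 (sub_pos.2 hlt)
  rw [le_div_iff₀ hc]
  have hI0 : ∫ ω in D0, X ω ∂P = condExpSet P X D0 * p0 := by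
    rw [condExpSet, ← hp0def]; field_simp
  have key : ∀ k, c ≤ R * (P (D k)).toReal := by
    intro k
    have hpk : (0:ℝ) ≤ (P (D k)).toReal := ENNReal.toReal_nonneg
    have hunion : (∫ ω in D0 ∪ D k, X ω ∂P)
        = (∫ ω in D0, X ω ∂P) + ∫ ω in D k, X ω ∂P :=
      setIntegral_union (hdisj0 k) (hDm k) hXi.integrableOn hXi.integrableOn
    have hmu : (P (D0 ∪ D k)).toReal = p0 + (P (D k)).toReal := by
      rw [measure_union (hdisj0 k) (hDm k),
        ENNReal.toReal_add (measure_ne_top _ _) (measure_ne_top _ _)]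
    have h1 := heq k
    rw [condExpSet, hunion, hmu] at h1
    have hden : p0 + (P (D k)).toReal ≠ 0 := by positivity
    have h2 : (∫ ω in D0, X ω ∂P) + (∫ ω in D k, X ω ∂P)
        = μb * (p0 + (P (D k)).toReal) := by
      field_simp at h1; linarith
    have hIk : (∫ ω in D k, X ω ∂P) ≤ R * (P (D k)).toReal := by
      have := integral_mono_ae (μ := P.restrict (D k)) hXi.integrableOn
        (integrable_const R) (ae_restrict_of_ae hbdd)
      simpa [Measure.restrict_apply_univ, mul_comm, measureReal_def] using this
    nlinarith [mul_nonneg hμb hpk]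
  have hsum : ∑ k, (P (D k)).toReal ≤ 1 := by
    have h2 : ∑ k, P (D k) ≤ 1 := by
      rw [← tsum_fintype (L := SummationFilter.unconditional _), ← measure_iUnion hdisj hDm]
      exact prob_le_one
    have := ENNReal.toReal_le_toReal (a := ∑ k, P (D k)) (b := 1)
      (by exact (lt_of_le_of_lt h2 (by norm_num)).ne) (by norm_num) |>.mpr h2
    simpa [ENNReal.toReal_sum (fun k _ => measure_ne_top P (D k))] using this
  calc (m : ℝ) * c = ∑ _k : Fin m, c := by
        simp [Finset.sum_const, mul_comm]
    _ ≤ ∑ k, R * (P (D k)).toReal := Finset.sum_le_sum fun k _ => key k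
    _ = R * ∑ k, (P (D k)).toReal := by rw [Finset.mul_sum]
    _ ≤ R * 1 := by
        exact mul_le_mul_of_nonneg_left hsum hR.le
    _ = R := mul_one R
end

section
/- Let X be an integrable real-valued random variable on a probability space, let μ_b be a real number, and let D_0, D', D'' be pairwise disjoint events, each of positive probability, such that E[X | D''] ≥ E[X | D'] > μ_b, E[X | D_0 ∪ D'] = μ_b, and E[X | D_0 ∪ D''] ≤ μ_b. Then P(D'') ≤ P(D'). -/
open MeasureTheory

/-- comparison of the probabilities of the last two cells. -/
theorem prob_comparison {Ω : Type*} [MeasurableSpace Ω] (P : Measure Ω)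
    [IsProbabilityMeasure P] (X : Ω → ℝ) (hXi : Integrable X P)
    (μb : ℝ) (D0 D' D'' : Set Ω)
    (hD0m : MeasurableSet D0) (hD'm : MeasurableSet D') (hD''m : MeasurableSet D'')
    (hD0 : 0 < P D0) (hD' : 0 < P D') (hD'' : 0 < P D'')
    (h01 : Disjoint D0 D') (h02 : Disjoint D0 D'') (h12 : Disjoint D' D'')
    (hge : condExpSet P X D' ≤ condExpSet P X D'')
    (hgt : μb < condExpSet P X D')
    (heq : condExpSet P X (D0 ∪ D') = μb)
    (hle : condExpSet P X (D0 ∪ D'') ≤ μb) :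
    P D'' ≤ P D' := by
  set p0 := (P D0).toReal with hp0def
  set p1 := (P D').toReal with hp1def
  set p2 := (P D'').toReal with hp2def
  have hfin0 : P D0 ≠ ⊤ := measure_ne_top P D0
  have hfin1 : P D' ≠ ⊤ := measure_ne_top P D'
  have hfin2 : P D'' ≠ ⊤ := measure_ne_top P D''
  have hp0 : 0 < p0 := ENNReal.toReal_pos hD0.ne' hfin0
  have hp1 : 0 < p1 := ENNReal.toReal_pos hD'.ne' hfin1
  have hp2 : 0 < p2 := ENNReal.toReal_pos hD''.ne' hfin2
  set I0 := ∫ ω in D0, X ω ∂P with hI0def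
  set I1 := ∫ ω in D', X ω ∂P with hI1def
  set I2 := ∫ ω in D'', X ω ∂P with hI2def
  have hU1 : (P (D0 ∪ D')).toReal = p0 + p1 := by
    rw [measure_union h01 hD'm, ENNReal.toReal_add hfin0 hfin1]
  have hU2 : (P (D0 ∪ D'')).toReal = p0 + p2 := by
    rw [measure_union h02 hD''m, ENNReal.toReal_add hfin0 hfin2]
  have hIU1 : (∫ ω in D0 ∪ D', X ω ∂P) = I0 + I1 :=
    setIntegral_union h01 hD'm hXi.integrableOn hXi.integrableOn
  have hIU2 : (∫ ω in D0 ∪ D'', X ω ∂P) = I0 + I2 :=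
    setIntegral_union h02 hD''m hXi.integrableOn hXi.integrableOn
  unfold condExpSet at hge hgt heq hle
  rw [hU1, hIU1] at heq
  rw [hU2, hIU2] at hle
  have heq' : I0 + I1 = μb * (p0 + p1) := by
    field_simp at heq; linarith [heq]
  have hle' : I0 + I2 ≤ μb * (p0 + p2) := by
    rw [div_le_iff₀ (by linarith)] at hle; linarith
  have hgt' : μb * p1 < I1 := by
    rw [lt_div_iff₀ hp1] at hgt; linarith
  have hge' : I1 * p2 ≤ I2 * p1 := by
    rw [div_le_div_iff₀ hp1 hp2] at hge; linarith
  -- want p2 ≤ p1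
  have key : I2 - I1 ≤ μb * (p2 - p1) := by linarith
  have : (P D'').toReal ≤ (P D').toReal := by
    by_contra h
    push_neg at h
    nlinarith [mul_pos hp1 hp2, mul_lt_mul_of_pos_right hgt' hp2]
  exact (ENNReal.toReal_le_toReal hfin2 hfin1).mp this
end

section
/- Let X be an integrable real-valued random variable on a probability space with nonatomic distribution, L ≤ X ≤ R almost surely, μ_a = E[X], and let μ_b satisfy μ_b < μ_a and P(X < μ_b) > 0, with D_0 = {X < μ_b}. Let m ∈ ℕ and suppose D_0^0, …, D_0^m is a measurable partition of D_0 with P(D_0^j) = P(D_0)/(m+1) and E[X | D_0^j] = E[X | D_0] for every j. Suppose K' ≥ 2 is an integer and μ_b = y_0 ≤ y_1 ≤ … ≤ y_{K'-1} ≤ R are reals such that, with D_i = {y_{i-1} ≤ X < y_i} for 1 ≤ i ≤ K'−1 and D_{K'} = {X ≥ y_{K'-1}}, one has E[X | D_0^j ∪ D_i] = μ_b for every j and every 1 ≤ i ≤ K'−1, and E[X | D_0^j ∪ D_{K'}] ≤ μ_b for every j. Then K' ≤ (m+1)·(μ_a − μ_b)/(P(X ∈ D_0)·(μ_b − E[X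 | D_0])) + m + 2. -/
open MeasureTheory
open scoped ENNReal

/-- upper bound on `K'`, the number of cells of the refined partition used by
the High Visibility Mechanism (Lemma 3). -/
theorem refined_partition_upper_bound {Ω : Type*} [MeasurableSpace Ω] (P : Measure Ω)
    [IsProbabilityMeasure P] (X : Ω → ℝ) (hXm : Measurable X) (hXi : Integrable X P)
    (hna : ∀ r : ℝ, P (X ⁻¹' {r}) = 0)
    (L R : ℝ) (hLR : L < R) (hbdd : ∀ᵐ ω ∂P, L ≤ X ω ∧ X ω ≤ R)
    (μa μb : ℝ) (hμa : μa = ∫ ω, X ω ∂P) (hμab : μb < μa)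
    (hD0 : 0 < P {ω | X ω < μb})
    (m : ℕ) (Dp : Fin (m + 1) → Set Ω)
    (hDpm : ∀ j, MeasurableSet (Dp j))
    (hDpdisj : Pairwise fun i j => Disjoint (Dp i) (Dp j))
    (hDpunion : (⋃ j, Dp j) = {ω | X ω < μb})
    (hDpprob : ∀ j, P (Dp j) = P {ω | X ω < μb} / ((m : ℝ≥0∞) + 1))
    (hDpexp : ∀ j, condExpSet P X (Dp j) = condExpSet P X {ω | X ω < μb})
    (K' : ℕ) (hK' : 2 ≤ K') (y : ℕ → ℝ)
    (hy0 : y 0 = μb)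
    (hmono : ∀ i, i + 1 ≤ K' - 1 → y i ≤ y (i + 1))
    (hyR : y (K' - 1) ≤ R)
    (heq : ∀ j, ∀ i, 1 ≤ i → i ≤ K' - 1 →
      condExpSet P X (Dp j ∪ {ω | y (i - 1) ≤ X ω ∧ X ω < y i}) = μb)
    (hlast : ∀ j, condExpSet P X (Dp j ∪ {ω | y (K' - 1) ≤ X ω}) ≤ μb) :
    (K' : ℝ) ≤ (m + 1) * (μa - μb) /
        ((P {ω | X ω < μb}).toReal * (μb - condExpSet P X {ω | X ω < μb})) + m + 2 := by
  
  classical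
  obtain ⟨K, rfl⟩ : ∃ K, K' = K + 2 := ⟨K' - 2, by omega⟩
  set D0 : Set Ω := {ω | X ω < μb} with hD0def
  have hD0m : MeasurableSet D0 := measurableSet_lt hXm measurable_const
  set p0 := (P D0).toReal with hp0def
  have hp0pos : 0 < p0 := ENNReal.toReal_pos hD0.ne' (measure_ne_top P _)
  set c := condExpSet P X D0 with hcdef
  have hID0 : ∫ ω in D0, X ω ∂P = c * p0 := by
    rw [hcdef, condExpSet, ← hp0def, div_mul_cancel₀ _ hp0pos.ne']
  -- monotonicity of y on [0, K+1]
  have ymono : ∀ b, b ≤ K + 1 → ∀ a, a ≤ b → y a ≤ y b := by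
    intro b
    induction b with
    | zero => intro _ a ha; have : a = 0 := Nat.le_zero.mp ha; simp [this]
    | succ n ih =>
      intro hb a ha
      rcases Nat.lt_or_ge a (n + 1) with h | h
      · exact (ih (by omega) a (Nat.lt_succ_iff.mp h)).trans (hmono n (by omega))
      · have : a = n + 1 := le_antisymm ha h
        simp [this]
  -- c < μb
  have hclt : c < μb := by
    have hnn : 0 ≤ᵐ[P.restrict D0] fun ω => μb - X ω :=
      (ae_restrict_iff' hD0m).2 (ae_of_all _ fun ω hω => sub_nonneg.2 (le_of_lt hω))
    have hint : Integrable (fun ω => μb - X ω) (P.restrict D0) :=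
      ((integrable_const μb).sub hXi).restrict
    have hpos : 0 < ∫ ω in D0, (μb - X ω) ∂P := by
      rw [integral_pos_iff_support_of_nonneg_ae hnn hint]
      refine lt_of_lt_of_le hD0 ?_
      calc P D0 = (P.restrict D0) D0 := (Measure.restrict_apply_self _ _).symm
        _ ≤ (P.restrict D0) (Function.support fun ω => μb - X ω) := by
            apply measure_mono
            intro ω hω
            exact sub_ne_zero.2 (ne_of_gt hω)
    have heq0 : ∫ ω in D0, (μb - X ω) ∂P = p0 * μb - c * p0 := by
      rw [integral_sub (integrableOn_const (C := μb) (measure_ne_top P _)) hXi.integrableOn,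
        hID0, setIntegral_const, measureReal_def, smul_eq_mul, ← hp0def]
    rw [heq0] at hpos
    nlinarith
  -- Dp 0 facts
  have hDp0sub : Dp 0 ⊆ D0 := hDpunion ▸ Set.subset_iUnion Dp 0
  set q := (P (Dp 0)).toReal with hqdef
  have hq : q = p0 / ((m : ℝ) + 1) := by
    rw [hqdef, hDpprob 0, ENNReal.toReal_div, hp0def,
      ENNReal.toReal_add (by simp) (by simp), ENNReal.toReal_natCast, ENNReal.toReal_one]
  have hqpos : 0 < q := by rw [hq]; positivity
  have hIDp0 : ∫ ω in Dp 0, X ω ∂P = c * q := by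
    have h := hDpexp 0
    rw [condExpSet, ← hqdef, div_eq_iff hqpos.ne'] at h
    exact h
  set d := q * (μb - c) with hddef
  have hdpos : 0 < d := mul_pos hqpos (by linarith)
  -- per-cell computation
  have hcell : ∀ i, 1 ≤ i → i ≤ K + 1 →
      ∫ ω in {ω | y (i - 1) ≤ X ω ∧ X ω < y i}, (X ω - μb) ∂P = d := by
    intro i h1 h2
    set E : Set Ω := {ω | y (i - 1) ≤ X ω ∧ X ω < y i} with hEdef
    have hEm : MeasurableSet E :=
      (measurableSet_le measurable_const hXm).inter (measurableSet_lt hXm measurable_const)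
    have hEsub : ∀ ω ∈ E, μb ≤ X ω := by
      intro ω hω
      have h0 : y 0 ≤ y (i - 1) := ymono (i - 1) (by omega) 0 (Nat.zero_le _)
      rw [← hy0]
      exact h0.trans hω.1
    have hdisjE : Disjoint (Dp 0) E :=
      Set.disjoint_left.2 fun ω ha hb => absurd (hDp0sub ha) (not_lt.2 (hEsub ω hb))
    have hPu : (P (Dp 0 ∪ E)).toReal = q + (P E).toReal := by
      rw [measure_union hdisjE hEm,
        ENNReal.toReal_add (measure_ne_top P _) (measure_ne_top P _), hqdef]
    have hPupos : 0 < (P (Dp 0 ∪ E)).toReal := by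
      rw [hPu]
      have := ENNReal.toReal_nonneg (a := P E)
      linarith
    have h := heq 0 i h1 (by omega)
    rw [condExpSet, div_eq_iff hPupos.ne',
      setIntegral_union hdisjE hEm hXi.integrableOn hXi.integrableOn, hIDp0, hPu] at h
    have hsub : ∫ ω in E, (X ω - μb) ∂P
        = (∫ ω in E, X ω ∂P) - (P E).toReal * μb := by
      rw [integral_sub hXi.integrableOn (integrableOn_const (measure_ne_top P _)),
        setIntegral_const, measureReal_def, smul_eq_mul]
    rw [hsub, hddef]
    nlinarith [h]
  -- the partition of Ω
  set S : ℕ → Set Ω := fun i =>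
    if i = 0 then D0 else if i = K + 2 then {ω | y (K + 1) ≤ X ω}
    else {ω | y (i - 1) ≤ X ω ∧ X ω < y i} with hSdef
  have hSm : ∀ i, MeasurableSet (S i) := by
    intro i
    simp only [hSdef]
    split_ifs
    · exact hD0m
    · exact measurableSet_le measurable_const hXm
    · exact (measurableSet_le measurable_const hXm).inter (measurableSet_lt hXm measurable_const)
  have hSlow : ∀ j, 1 ≤ j → j ≤ K + 2 → ∀ ω ∈ S j, y (j - 1) ≤ X ω := by
    intro j h1 h2 ω hω
    simp only [hSdef] at hω
    rw [if_neg (by omega)] at hω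
    by_cases hj : j = K + 2
    · rw [if_pos hj] at hω
      subst hj
      exact hω
    · rw [if_neg hj] at hω
      exact hω.1
  have hSup : ∀ j, 1 ≤ j → j ≤ K + 1 → ∀ ω ∈ S j, X ω < y j := by
    intro j h1 h2 ω hω
    simp only [hSdef] at hω
    rw [if_neg (by omega), if_neg (by omega)] at hω
    exact hω.2
  have hdisjS : ∀ i j, i < j → j ≤ K + 2 → Disjoint (S i) (S j) := by
    intro i j hij hj
    rcases Nat.eq_zero_or_pos i with rfl | hi
    · refine Set.disjoint_left.2 fun ω h0 hjω => ?_
      have h1 := hSlow j (by omega) hj ω hjω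
      have h2 : y 0 ≤ y (j - 1) := ymono (j - 1) (by omega) 0 (Nat.zero_le _)
      have hω0 : X ω < μb := by simpa [hSdef, hD0def] using h0
      have : μb ≤ X ω := by rw [← hy0]; exact h2.trans h1
      linarith
    · refine Set.disjoint_left.2 fun ω hiω hjω => ?_
      have h1 := hSup i hi (by omega) ω hiω
      have h2 := hSlow j (by omega) hj ω hjω
      have h3 : y i ≤ y (j - 1) := ymono (j - 1) (by omega) i (by omega)
      linarith
  have hunion : ⋃ i ∈ Finset.range (K + 3), S i = Set.univ := by
    apply Set.eq_univ_of_forall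
    intro ω
    simp only [Set.mem_iUnion, Finset.mem_range]
    by_cases h0 : X ω < μb
    · exact ⟨0, by omega, by simp only [hSdef, if_pos rfl]; exact h0⟩
    · push_neg at h0
      by_cases hK : y (K + 1) ≤ X ω
      · refine ⟨K + 2, by omega, ?_⟩
        simp only [hSdef, if_neg (by omega : ¬ K + 2 = 0), if_pos rfl]
        exact hK
      · push_neg at hK
        have hQ : ∃ n, X ω < y n := ⟨K + 1, hK⟩
        have hn1 : X ω < y (Nat.find hQ) := Nat.find_spec hQ
        have hnle : Nat.find hQ ≤ K + 1 := Nat.find_le hK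
        have hn0 : Nat.find hQ ≠ 0 := by
          intro h
          rw [h, hy0] at hn1
          linarith
        have hprev : ¬ X ω < y (Nat.find hQ - 1) := Nat.find_min hQ (by omega)
        refine ⟨Nat.find hQ, by omega, ?_⟩
        simp only [hSdef, if_neg hn0, if_neg (by omega : ¬ Nat.find hQ = K + 2)]
        exact ⟨not_lt.1 hprev, hn1⟩
  have hf : Integrable (fun ω => X ω - μb) P := hXi.sub (integrable_const μb)
  have hsum : ∫ ω, (X ω - μb) ∂P
      = ∑ i ∈ Finset.range (K + 3), ∫ ω in S i, (X ω - μb) ∂P := by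
    calc ∫ ω, (X ω - μb) ∂P = ∫ ω in Set.univ, (X ω - μb) ∂P := setIntegral_univ.symm
      _ = ∫ ω in ⋃ i ∈ Finset.range (K + 3), S i, (X ω - μb) ∂P := by rw [hunion]
      _ = _ := by
          refine integral_biUnion_finset _ (fun i _ => hSm i) ?_ (fun i _ => hf.integrableOn)
          intro a ha b hb hab
          simp only [Finset.coe_range, Set.mem_Iio] at ha hb
          rcases lt_or_gt_of_ne hab with h | h
          · exact hdisjS a b h (by omega)
          · exact (hdisjS b a h (by omega)).symm
  have hS0 : ∫ ω in S 0, (X ω - μb) ∂P = c * p0 - p0 * μb := by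
    have hs : S 0 = D0 := by simp [hSdef]
    rw [hs, integral_sub hXi.integrableOn (integrableOn_const (measure_ne_top P _)),
      hID0, setIntegral_const, measureReal_def, smul_eq_mul, ← hp0def]
  have hSmid : ∀ i ∈ Finset.range (K + 1), ∫ ω in S (i + 1), (X ω - μb) ∂P = d := by
    intro i hi
    rw [Finset.mem_range] at hi
    have hs : S (i + 1) = {ω | y (i + 1 - 1) ≤ X ω ∧ X ω < y (i + 1)} := by
      simp only [hSdef]
      rw [if_neg (by omega), if_neg (by omega)]
    rw [hs]
    exact hcell (i + 1) (by omega) (by omega)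
  have hSlast : 0 ≤ ∫ ω in S (K + 2), (X ω - μb) ∂P := by
    apply setIntegral_nonneg (hSm _)
    intro ω hω
    have h1 : y (K + 2 - 1) ≤ X ω := hSlow (K + 2) (by omega) le_rfl ω hω
    have h2 : μb ≤ X ω := by
      rw [← hy0]
      exact (ymono (K + 1) le_rfl 0 (by omega)).trans h1
    linarith
  have hTot : ∫ ω, (X ω - μb) ∂P = μa - μb := by
    rw [integral_sub hXi (integrable_const μb), integral_const, measureReal_def, measure_univ,
      ENNReal.toReal_one, one_smul, hμa]
  have key : μa - μb = (c * p0 - p0 * μb) + ((K : ℝ) + 1) * d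
      + ∫ ω in S (K + 2), (X ω - μb) ∂P := by
    have h := hsum
    rw [hTot, Finset.sum_range_succ, Finset.sum_range_succ',
      Finset.sum_congr rfl hSmid, Finset.sum_const, Finset.card_range, hS0,
      nsmul_eq_mul] at h
    push_cast at h
    linarith
  -- final arithmetic
  have hp0q : p0 = ((m : ℝ) + 1) * q := by
    rw [hq]
    field_simp
  have hden : p0 * (μb - c) = ((m : ℝ) + 1) * d := by rw [hp0q, hddef]; ring
  have h1 : ((K : ℝ) + 1) * d ≤ (μa - μb) + ((m : ℝ) + 1) * d := by
    have hden' : c * p0 - p0 * μb = -(((m : ℝ) + 1) * d) := by rw [← hden]; ring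
    linarith [key, hSlast, hden']
  have h2 : ((K : ℝ) - m) * d ≤ μa - μb := by nlinarith [h1]
  have h3 : ((K : ℝ) - m) ≤ (μa - μb) / d := (le_div_iff₀ hdpos).mpr h2
  rw [hden, mul_div_mul_left _ _ (by positivity : ((m : ℝ) + 1) ≠ 0)]
  push_cast
  linarith
end

section
/- Let X be an integrable real-valued random variable on a probability space whose distribution is nonatomic, let μ_b be a real number with P(X < μ_b) > 0, and let D_0 = {X < μ_b}. Then for every m ∈ ℕ there exists a measurable partition D_0^0, …, D_0^m of the event D_0 such that for every j, P(D_0^j) = P(D_0)/(m+1) and E[X·1_{D_0^j}] = E[X·1_{D_0}]/(m+1) (equivalently, E[X | D_0^j] = E[X | D_0]). -/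
open MeasureTheory
open scoped ENNReal

namespace EqSplit
open Set Filter Topology


variable (ν : Measure ℝ) [IsFiniteMeasure ν]

/-- CDF-like function. -/
noncomputable def Fc (t : ℝ) : ℝ := (ν (Set.Iio t)).toReal

/-- Sublevel set of the CDF. -/
def Sl (a : ℝ) : Set ℝ := {x | Fc ν x < a}

/-- Integral over the sublevel set. -/
noncomputable def gl (a : ℝ) : ℝ := ∫ x in Sl ν a, x ∂ν

/-- Total mass. -/
noncomputable def pt : ℝ := (ν Set.univ).toReal

lemma Fc_mono : Monotone (Fc ν) := fun s t h =>
  ENNReal.toReal_mono (measure_ne_top _ _) (measure_mono (Iio_subset_Iio h))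

lemma Fc_nonneg (t : ℝ) : 0 ≤ Fc ν t := ENNReal.toReal_nonneg

lemma Fc_le_pt (t : ℝ) : Fc ν t ≤ pt ν :=
  ENNReal.toReal_mono (measure_ne_top _ _) (measure_mono (subset_univ _))

lemma Sl_meas (a : ℝ) : MeasurableSet (Sl ν a) :=
  (Fc_mono ν).measurable measurableSet_Iio

lemma Sl_mono {a b : ℝ} (h : a ≤ b) : Sl ν a ⊆ Sl ν b := fun _ hx => lt_of_lt_of_le hx h

lemma Sl_nonpos {a : ℝ} (h : a ≤ 0) : Sl ν a = ∅ := by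
  ext x; simp only [Sl, mem_setOf_eq, mem_empty_iff_false, iff_false, not_lt]
  exact h.trans (Fc_nonneg ν x)

lemma tendsto_Fc_atBot : Tendsto (fun n : ℕ => Fc ν (-(n : ℝ))) atTop (𝓝 0) := by
  have h1 : Tendsto (fun n : ℕ => ν (Iio (-(n : ℝ)))) atTop (𝓝 (ν (⋂ n : ℕ, Iio (-(n : ℝ))))) := by
    apply tendsto_measure_iInter_atTop
    · exact fun n => measurableSet_Iio.nullMeasurableSet
    · intro i j hij
      exact Iio_subset_Iio (by have := (Nat.cast_le (α := ℝ)).2 hij; linarith)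
    · exact ⟨0, measure_ne_top _ _⟩
  have h2 : (⋂ n : ℕ, Iio (-(n : ℝ))) = ∅ := by
    ext x
    simp only [mem_iInter, mem_Iio, mem_empty_iff_false, iff_false, not_forall, not_lt]
    obtain ⟨n, hn⟩ := exists_nat_ge (-x)
    exact ⟨n, by linarith⟩
  rw [h2, measure_empty] at h1
  have := (ENNReal.tendsto_toReal (by simp : (0 : ℝ≥0∞) ≠ ⊤)).comp h1
  simpa [Fc, Function.comp_def] using this

lemma tendsto_Fc_atTop : Tendsto (fun n : ℕ => Fc ν (n : ℝ)) atTop (𝓝 (pt ν)) := by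
  have h1 : Tendsto (fun n : ℕ => ν (Iio (n : ℝ))) atTop (𝓝 (ν (⋃ n : ℕ, Iio (n : ℝ)))) := by
    apply tendsto_measure_iUnion_atTop
    intro i j hij
    exact Iio_subset_Iio (Nat.cast_le.2 hij)
  have h2 : (⋃ n : ℕ, Iio (n : ℝ)) = univ := by
    ext x
    simp only [mem_iUnion, mem_Iio, mem_univ, iff_true]
    obtain ⟨n, hn⟩ := exists_nat_gt x
    exact ⟨n, hn⟩
  rw [h2] at h1
  exact (ENNReal.tendsto_toReal (measure_ne_top _ _)).comp h1

/-- Key lemma: a downward-closed set whose CDF values are `≤ a` inside and `≥ a` outside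
has measure exactly `ofReal a`. -/
lemma meas_of_closed (hna : ∀ r : ℝ, ν {r} = 0) {A : Set ℝ} {a : ℝ}
    (hdc : ∀ ⦃x y : ℝ⦄, y ≤ x → x ∈ A → y ∈ A)
    (h1 : ∀ x ∈ A, Fc ν x ≤ a) (h2 : ∀ x ∉ A, a ≤ Fc ν x)
    (ha : 0 ≤ a) (hap : a ≤ pt ν) : ν A = ENNReal.ofReal a := by
  rcases A.eq_empty_or_nonempty with rfl | hAne
  · have h3 : ∀ x : ℝ, a ≤ Fc ν x := fun x => h2 x (by simp)
    have h4 : a ≤ 0 := ge_of_tendsto (tendsto_Fc_atBot ν) (Eventually.of_forall fun n => h3 _)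
    have : a = 0 := le_antisymm h4 ha
    simp [this]
  by_cases hbd : BddAbove A
  · set t := sSup A with ht
    have hsub1 : Iio t ⊆ A := by
      intro x hx
      obtain ⟨y, hyA, hxy⟩ := exists_lt_of_lt_csSup hAne hx
      exact hdc hxy.le hyA
    have hsub2 : A ⊆ Iic t := fun x hx => le_csSup hbd hx
    have hIic : ν (Iic t) = ν (Iio t) := by
      rw [← Iio_union_right]
      refine le_antisymm ?_ (measure_mono subset_union_left)
      calc ν (Iio t ∪ {t}) ≤ ν (Iio t) + ν {t} := measure_union_le _ _
        _ = ν (Iio t) := by rw [hna t, add_zero]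
    have hνA : ν A = ν (Iio t) := by
      refine le_antisymm ?_ (measure_mono hsub1)
      calc ν A ≤ ν (Iic t) := measure_mono hsub2
        _ = ν (Iio t) := hIic
    -- F t ≤ a
    have hle : Fc ν t ≤ a := by
      have hU : (⋃ n : ℕ, Iio (t - 1/(n+1))) = Iio t := by
        ext x
        simp only [mem_iUnion, mem_Iio]
        constructor
        · rintro ⟨n, hn⟩; have : (0:ℝ) < 1/(n+1) := by positivity
          linarith
        · intro hx
          obtain ⟨n, hn⟩ := exists_nat_one_div_lt (sub_pos.2 hx)
          exact ⟨n, by linarith⟩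
      have hmono : Monotone (fun n : ℕ => Iio (t - 1/((n:ℝ)+1))) := by
        intro i j hij
        apply Iio_subset_Iio
        have h1 : (1:ℝ)/((j:ℝ)+1) ≤ 1/((i:ℝ)+1) := by
          apply one_div_le_one_div_of_le (by positivity)
          have := (Nat.cast_le (α := ℝ)).2 hij
          linarith
        linarith
      have h1' : Tendsto (fun n : ℕ => ν (Iio (t - 1/((n:ℝ)+1)))) atTop (𝓝 (ν (Iio t))) := by
        have := tendsto_measure_iUnion_atTop (μ := ν) hmono
        rwa [hU] at this
      have h2' : Tendsto (fun n : ℕ => Fc ν (t - 1/((n:ℝ)+1))) atTop (𝓝 (Fc ν t)) :=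
        (ENNReal.tendsto_toReal (measure_ne_top _ _)).comp h1'
      apply le_of_tendsto h2'
      apply Eventually.of_forall
      intro n
      have hlt : t - 1/((n:ℝ)+1) < t := by
        have : (0:ℝ) < 1/((n:ℝ)+1) := by positivity
        linarith
      obtain ⟨y, hyA, hy⟩ := exists_lt_of_lt_csSup hAne hlt
      exact le_trans (Fc_mono ν hy.le) (h1 y hyA)
    -- a ≤ F t
    have hge : a ≤ Fc ν t := by
      have hI : (⋂ n : ℕ, Iio (t + 1/((n:ℝ)+1))) = Iic t := by
        ext x
        simp only [mem_iInter, mem_Iio, mem_Iic]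
        constructor
        · intro h
          by_contra hx
          push_neg at hx
          obtain ⟨n, hn⟩ := exists_nat_one_div_lt (sub_pos.2 hx)
          have := h n
          linarith
        · intro hx n
          have : (0:ℝ) < 1/((n:ℝ)+1) := by positivity
          linarith
      have hanti : Antitone (fun n : ℕ => Iio (t + 1/((n:ℝ)+1))) := by
        intro i j hij
        apply Iio_subset_Iio
        have h1 : (1:ℝ)/((j:ℝ)+1) ≤ 1/((i:ℝ)+1) := by
          apply one_div_le_one_div_of_le (by positivity)
          have := (Nat.cast_le (α := ℝ)).2 hij
          linarith
        linarith
      have h1' : Tendsto (fun n : ℕ => ν (Iio (t + 1/((n:ℝ)+1)))) atTop (𝓝 (ν (Iic t))) := by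
        have := tendsto_measure_iInter_atTop (μ := ν)
          (fun n => measurableSet_Iio.nullMeasurableSet) hanti ⟨0, measure_ne_top _ _⟩
        rwa [hI] at this
      rw [hIic] at h1'
      have h2' : Tendsto (fun n : ℕ => Fc ν (t + 1/((n:ℝ)+1))) atTop (𝓝 (Fc ν t)) :=
        (ENNReal.tendsto_toReal (measure_ne_top _ _)).comp h1'
      apply ge_of_tendsto h2'
      apply Eventually.of_forall
      intro n
      apply h2
      intro hmem
      have := hsub2 hmem
      rw [mem_Iic] at this
      have h0 : (0:ℝ) < 1/((n:ℝ)+1) := by positivity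
      linarith
    have hFt : Fc ν t = a := le_antisymm hle hge
    rw [hνA, ← hFt]
    exact (ENNReal.ofReal_toReal (measure_ne_top _ _)).symm
  · -- unbounded: A = univ
    have hAuniv : A = univ := by
      ext x
      simp only [mem_univ, iff_true]
      rw [not_bddAbove_iff] at hbd
      obtain ⟨y, hyA, hxy⟩ := hbd x
      exact hdc hxy.le hyA
    have h3 : ∀ x : ℝ, Fc ν x ≤ a := fun x => h1 x (hAuniv ▸ mem_univ x)
    have h4 : pt ν ≤ a := le_of_tendsto (tendsto_Fc_atTop ν) (Eventually.of_forall fun n => h3 _)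
    have hap' : a = pt ν := le_antisymm hap h4
    rw [hAuniv, hap', pt]
    exact (ENNReal.ofReal_toReal (measure_ne_top _ _)).symm

lemma Sl_measure_eq (hna : ∀ r : ℝ, ν {r} = 0) {a : ℝ} (ha : 0 ≤ a) (hap : a ≤ pt ν) :
    ν (Sl ν a) = ENNReal.ofReal a := by
  apply meas_of_closed ν hna _ _ _ ha hap
  · intro x y hyx hx
    exact lt_of_le_of_lt (Fc_mono ν hyx) hx
  · exact fun x hx => hx.le
  · exact fun x hx => not_lt.1 hx

lemma level_null (hna : ∀ r : ℝ, ν {r} = 0) (a : ℝ) : ν {x | Fc ν x = a} = 0 := by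
  rcases lt_or_ge a 0 with ha | ha
  · have : {x | Fc ν x = a} = ∅ := by
      ext x; simp only [mem_setOf_eq, mem_empty_iff_false, iff_false]
      intro h; exact absurd (h ▸ Fc_nonneg ν x) (not_le.2 ha)
    simp [this]
  rcases lt_or_ge (pt ν) a with hap | hap
  · have : {x | Fc ν x = a} = ∅ := by
      ext x; simp only [mem_setOf_eq, mem_empty_iff_false, iff_false]
      intro h; exact absurd (h ▸ Fc_le_pt ν x) (not_le.2 hap)
    simp [this]
  · have hle : ν {x | Fc ν x ≤ a} = ENNReal.ofReal a := by
      apply meas_of_closed ν hna _ _ _ ha hap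
      · intro x y hyx hx
        exact le_trans (Fc_mono ν hyx) hx
      · exact fun x hx => hx
      · exact fun x hx => (not_le.1 hx).le
    have hdiff : {x | Fc ν x = a} = {x | Fc ν x ≤ a} \ Sl ν a := by
      ext x
      simp only [mem_setOf_eq, mem_diff, Sl]
      constructor
      · intro h; exact ⟨h.le, by rw [h]; exact lt_irrefl a⟩
      · intro ⟨h1, h2⟩; exact le_antisymm h1 (not_lt.1 h2)
    have hsub : Sl ν a ⊆ {x | Fc ν x ≤ a} := fun x (hx : Fc ν x < a) => hx.le
    rw [hdiff, measure_diff hsub (Sl_meas ν a).nullMeasurableSet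
      (measure_ne_top _ _), hle, Sl_measure_eq ν hna ha hap, tsub_self]


lemma int_diff (hi : Integrable (fun x : ℝ => x) ν) {s t : Set ℝ}
    (hs : MeasurableSet s) (ht : MeasurableSet t) (hst : s ⊆ t) :
    ∫ x in t \ s, x ∂ν = (∫ x in t, x ∂ν) - ∫ x in s, x ∂ν := by
  have h := setIntegral_union (f := fun x : ℝ => x) (μ := ν) disjoint_sdiff_right
    (ht.diff hs) hi.integrableOn hi.integrableOn
  rw [union_diff_cancel hst] at h
  linarith

lemma gl_cont (hi : Integrable (fun x : ℝ => x) ν) (hna : ∀ r : ℝ, ν {r} = 0) :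
    Continuous (gl ν) := by
  rw [continuous_iff_continuousAt]
  intro a
  rw [ContinuousAt, tendsto_iff_seq_tendsto]
  intro u hu
  have key : ∀ b, gl ν b = ∫ x, (Sl ν b).indicator (fun x => x) x ∂ν := fun b =>
    (integral_indicator (Sl_meas ν b)).symm
  have main : Tendsto (fun n => ∫ x, (Sl ν (u n)).indicator (fun x => x) x ∂ν) atTop
      (𝓝 (∫ x, (Sl ν a).indicator (fun x => x) x ∂ν)) := by
    apply tendsto_integral_of_dominated_convergence (fun x => |x|)
    · intro n; exact (measurable_id.indicator (Sl_meas ν _)).aestronglyMeasurable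
    · exact hi.abs
    · intro n
      apply Eventually.of_forall; intro x
      rw [Real.norm_eq_abs, ← Real.norm_eq_abs]
      exact norm_indicator_le_norm_self _ _
    · have h0 : ∀ᵐ x ∂ν, x ∉ {x | Fc ν x = a} :=
        measure_eq_zero_iff_ae_notMem.1 (level_null ν hna a)
      filter_upwards [h0] with x hx
      rcases lt_or_gt_of_ne hx with hlt | hgt
      · have hev : ∀ᶠ n in atTop, Fc ν x < u n := hu.eventually_const_lt hlt
        have hxa : x ∈ Sl ν a := hlt
        rw [indicator_of_mem hxa (fun x : ℝ => x)]
        apply Tendsto.congr' _ (tendsto_const_nhds (x := x))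
        filter_upwards [hev] with n hn
        have hmem : x ∈ Sl ν (u n) := hn
        exact (indicator_of_mem hmem (fun x : ℝ => x)).symm
      · have hev : ∀ᶠ n in atTop, u n < Fc ν x := hu.eventually_lt_const hgt
        have hxa : x ∉ Sl ν a := not_lt.2 hgt.le
        rw [indicator_of_notMem hxa (fun x : ℝ => x)]
        apply Tendsto.congr' _ (tendsto_const_nhds (x := (0:ℝ)))
        filter_upwards [hev] with n hn
        have hmem : x ∉ Sl ν (u n) := fun hc => absurd hc (not_lt.2 hn.le)
        exact (indicator_of_notMem hmem (fun x : ℝ => x)).symm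
  rw [key a]
  exact main.congr fun n => (key (u n)).symm

lemma avg_mono (hi : Integrable (fun x : ℝ => x) ν) {A B : Set ℝ}
    (hA : MeasurableSet A) (hB : MeasurableSet B)
    (hAB : ∀ x ∈ A, ∀ y ∈ B, x ≤ y) :
    (ν B).toReal * ∫ x in A, x ∂ν ≤ (ν A).toReal * ∫ x in B, x ∂ν := by
  rcases A.eq_empty_or_nonempty with rfl | hAne
  · simp
  rcases B.eq_empty_or_nonempty with rfl | hBne
  · simp
  obtain ⟨y0, hy0⟩ := hBne
  have hbd : BddAbove A := ⟨y0, fun x hx => hAB x hx y0 hy0⟩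
  set w := sSup A with hw
  have hwu : ∀ x ∈ A, x ≤ w := fun x hx => le_csSup hbd hx
  have hwl : ∀ y ∈ B, w ≤ y := fun y hy => csSup_le hAne (fun x hx => hAB x hx y hy)
  have h1 : ∫ x in A, x ∂ν ≤ (ν A).toReal * w := by
    have := setIntegral_mono_on hi.integrableOn
      (integrableOn_const (measure_ne_top ν A)) hA hwu
    rwa [setIntegral_const, smul_eq_mul] at this
  have h2 : (ν B).toReal * w ≤ ∫ x in B, x ∂ν := by
    have := setIntegral_mono_on (integrableOn_const (measure_ne_top ν B))
      hi.integrableOn hB hwl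
    rwa [setIntegral_const, smul_eq_mul] at this
  have hA0 : 0 ≤ (ν A).toReal := ENNReal.toReal_nonneg
  have hB0 : 0 ≤ (ν B).toReal := ENNReal.toReal_nonneg
  calc (ν B).toReal * ∫ x in A, x ∂ν ≤ (ν B).toReal * ((ν A).toReal * w) :=
        mul_le_mul_of_nonneg_left h1 hB0
    _ = (ν A).toReal * ((ν B).toReal * w) := by ring
    _ ≤ (ν A).toReal * ∫ x in B, x ∂ν := mul_le_mul_of_nonneg_left h2 hA0


lemma split (hi : Integrable (fun x : ℝ => x) ν) (hna : ∀ r : ℝ, ν {r} = 0) :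
    ∀ (n : ℕ) (a b : ℝ) (T : Set ℝ), 0 ≤ a → a ≤ b → b ≤ pt ν → MeasurableSet T →
    Sl ν b ⊆ T → ν T = ν (Sl ν b) →
    ∃ B : Fin (n+1) → Set ℝ,
      (∀ j, MeasurableSet (B j)) ∧
      (Pairwise fun i j => Disjoint (B i) (B j)) ∧
      (⋃ j, B j) = T \ Sl ν a ∧
      (∀ j, ν (B j) = ENNReal.ofReal ((b - a)/(n+1))) ∧
      (∀ j, (∫ x in B j, x ∂ν) = (gl ν b - gl ν a)/(n+1)) := by
  intro n
  induction n with
  | zero =>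
    intro a b T ha hab hbp hTm hST hνT
    have hsub : Sl ν a ⊆ T := (Sl_mono ν hab).trans hST
    refine ⟨fun _ => T \ Sl ν a, fun _ => hTm.diff (Sl_meas ν a), ?_, ?_, ?_, ?_⟩
    · intro i j hij
      exact absurd ((Fin.fin_one_eq_zero i).trans (Fin.fin_one_eq_zero j).symm) hij
    · simp [iUnion_const]
    · intro j
      rw [measure_diff hsub (Sl_meas ν a).nullMeasurableSet (measure_ne_top _ _), hνT,
        Sl_measure_eq ν hna (ha.trans hab) hbp, Sl_measure_eq ν hna ha (hab.trans hbp),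
        ← ENNReal.ofReal_sub _ ha]
      norm_num
    · intro j
      rw [int_diff ν hi (Sl_meas ν a) hTm hsub]
      have hT0 : ν (T \ Sl ν b) = 0 := by
        rw [measure_diff hST (Sl_meas ν b).nullMeasurableSet (measure_ne_top _ _), hνT, tsub_self]
      have hTb : ∫ x in T, x ∂ν = gl ν b := by
        have h1 := int_diff ν hi (Sl_meas ν b) hTm hST
        rw [setIntegral_measure_zero _ hT0] at h1
        have h2 : gl ν b = ∫ x in Sl ν b, x ∂ν := rfl
        linarith
      rw [hTb]
      have h3 : (∫ x in Sl ν a, x ∂ν) = gl ν a := rfl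
      rw [h3]
      norm_num
  | succ n IH =>
    intro a b T ha hab hbp hTm hST hνT
    set q : ℝ := (b - a) / (n + 2) with hqdef
    have hn2 : (0:ℝ) < (n:ℝ) + 2 := by positivity
    have hq0 : 0 ≤ q := div_nonneg (by linarith) hn2.le
    have hqr : q ≤ b - a := by
      rw [hqdef, div_le_iff₀ hn2]; nlinarith [sub_nonneg.2 hab]
    have hT0 : ν (T \ Sl ν b) = 0 := by
      rw [measure_diff hST (Sl_meas ν b).nullMeasurableSet (measure_ne_top _ _), hνT, tsub_self]
    have hTb : ∫ x in T, x ∂ν = gl ν b := by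
      have h1 := int_diff ν hi (Sl_meas ν b) hTm hST
      rw [setIntegral_measure_zero _ hT0] at h1
      have h2 : gl ν b = ∫ x in Sl ν b, x ∂ν := rfl
      linarith
    set h : ℝ → ℝ := fun θ => (gl ν (a + θ) - gl ν a) + (gl ν b - gl ν (b - q + θ)) with hhdef
    have hcont : Continuous h := by
      have hg := gl_cont ν hi hna
      apply Continuous.add
      · exact (hg.comp (by continuity)).sub continuous_const
      · exact continuous_const.sub (hg.comp (by continuity))
    have hmain : ∃ θ ∈ Icc (0:ℝ) q, h θ = (gl ν b - gl ν a) / ((n:ℝ) + 2) := by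
      rcases eq_or_lt_of_le hab with rfl | hlt
      · refine ⟨0, mem_Icc.2 ⟨le_rfl, hq0⟩, ?_⟩
        have hq' : q = 0 := by rw [hqdef]; simp
        simp [hhdef, hq']
      · have hr : (0:ℝ) < b - a := by linarith
        have hqpos : 0 < q := div_pos hr hn2
        have hqn2 : q * ((n:ℝ) + 2) = b - a := by rw [hqdef]; field_simp
        -- lower slab bound : h q ≤ tgt
        have haqb : a + q ≤ b := by linarith
        have haqp : a + q ≤ pt ν := haqb.trans hbp
        have haq0 : (0:ℝ) ≤ a + q := by linarith
        have hsubaq : Sl ν (a+q) ⊆ T := (Sl_mono ν haqb).trans hST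
        have hmA : ν (Sl ν (a+q) \ Sl ν a) = ENNReal.ofReal q := by
          rw [measure_diff (Sl_mono ν (by linarith)) (Sl_meas ν a).nullMeasurableSet
            (measure_ne_top _ _), Sl_measure_eq ν hna haq0 haqp,
            Sl_measure_eq ν hna ha (hab.trans hbp), ← ENNReal.ofReal_sub _ ha]
          congr 1; ring
        have hmB : ν (T \ Sl ν (a+q)) = ENNReal.ofReal (b - a - q) := by
          rw [measure_diff hsubaq (Sl_meas _ _).nullMeasurableSet (measure_ne_top _ _), hνT,
            Sl_measure_eq ν hna (ha.trans hab) hbp, Sl_measure_eq ν hna haq0 haqp,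
            ← ENNReal.ofReal_sub _ haq0]
          congr 1; ring
        have hIA : ∫ x in Sl ν (a+q) \ Sl ν a, x ∂ν = gl ν (a+q) - gl ν a :=
          int_diff ν hi (Sl_meas _ _) (Sl_meas _ _) (Sl_mono ν (by linarith))
        have hIB : ∫ x in T \ Sl ν (a+q), x ∂ν = gl ν b - gl ν (a+q) := by
          rw [int_diff ν hi (Sl_meas _ _) hTm hsubaq, hTb]
          rfl
        have havg := avg_mono ν hi ((Sl_meas ν (a+q)).diff (Sl_meas ν a))
          (hTm.diff (Sl_meas ν (a+q))) ?_
        rotate_left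
        · intro x hx y hy
          have h1 : Fc ν x < a + q := hx.1
          have h2 : a + q ≤ Fc ν y := not_lt.1 hy.2
          exact ((Fc_mono ν).reflect_lt (lt_of_lt_of_le h1 h2)).le
        rw [hmA, hmB, hIA, hIB, ENNReal.toReal_ofReal hq0,
          ENNReal.toReal_ofReal (by linarith : (0:ℝ) ≤ b - a - q)] at havg
        have hq_le : h q ≤ (gl ν b - gl ν a) / ((n:ℝ) + 2) := by
          have hqval : h q = gl ν (a+q) - gl ν a := by
            rw [hhdef]
            have e : b - q + q = b := by ring
            simp only [e]
            ring
          rw [hqval, le_div_iff₀ hn2]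
          have e : b - a - q = q * ((n:ℝ) + 1) := by rw [← hqn2]; ring
          rw [e, mul_assoc] at havg
          have h6 := le_of_mul_le_mul_left havg hqpos
          linarith [h6]
        -- upper slab bound : tgt ≤ h 0
        have hbq0 : (0:ℝ) ≤ b - q := by linarith
        have hbqp : b - q ≤ pt ν := by linarith [hbp]
        have hsubbq : Sl ν (b-q) ⊆ T := (Sl_mono ν (by linarith)).trans hST
        have hmA' : ν (Sl ν (b-q) \ Sl ν a) = ENNReal.ofReal (b - a - q) := by
          rw [measure_diff (Sl_mono ν (by linarith)) (Sl_meas ν a).nullMeasurableSet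
            (measure_ne_top _ _), Sl_measure_eq ν hna hbq0 hbqp,
            Sl_measure_eq ν hna ha (hab.trans hbp), ← ENNReal.ofReal_sub _ ha]
          congr 1; ring
        have hmB' : ν (T \ Sl ν (b-q)) = ENNReal.ofReal q := by
          rw [measure_diff hsubbq (Sl_meas _ _).nullMeasurableSet (measure_ne_top _ _), hνT,
            Sl_measure_eq ν hna (ha.trans hab) hbp, Sl_measure_eq ν hna hbq0 hbqp,
            ← ENNReal.ofReal_sub _ hbq0]
          congr 1; ring
        have hIA' : ∫ x in Sl ν (b-q) \ Sl ν a, x ∂ν = gl ν (b-q) - gl ν a :=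
          int_diff ν hi (Sl_meas _ _) (Sl_meas _ _) (Sl_mono ν (by linarith))
        have hIB' : ∫ x in T \ Sl ν (b-q), x ∂ν = gl ν b - gl ν (b-q) := by
          rw [int_diff ν hi (Sl_meas _ _) hTm hsubbq, hTb]
          rfl
        have havg' := avg_mono ν hi ((Sl_meas ν (b-q)).diff (Sl_meas ν a))
          (hTm.diff (Sl_meas ν (b-q))) ?_
        rotate_left
        · intro x hx y hy
          have h1 : Fc ν x < b - q := hx.1
          have h2 : b - q ≤ Fc ν y := not_lt.1 hy.2
          exact ((Fc_mono ν).reflect_lt (lt_of_lt_of_le h1 h2)).le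
        rw [hmA', hmB', hIA', hIB', ENNReal.toReal_ofReal hq0,
          ENNReal.toReal_ofReal (by linarith : (0:ℝ) ≤ b - a - q)] at havg'
        have h0_ge : (gl ν b - gl ν a) / ((n:ℝ) + 2) ≤ h 0 := by
          have h0val : h 0 = gl ν b - gl ν (b - q) := by
            rw [hhdef]
            simp only [add_zero]
            ring
          rw [h0val, div_le_iff₀ hn2]
          have e : b - a - q = q * ((n:ℝ) + 1) := by rw [← hqn2]; ring
          rw [e, mul_assoc] at havg'
          have h6 := le_of_mul_le_mul_left havg' hqpos
          linarith [h6]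
        have := intermediate_value_Icc' hq0 hcont.continuousOn
        obtain ⟨θ, hθmem, hθeq⟩ := this ⟨hq_le, h0_ge⟩
        exact ⟨θ, hθmem, hθeq⟩
    obtain ⟨θ, hθmem, hθeq⟩ := hmain
    rw [mem_Icc] at hθmem
    obtain ⟨hθ0, hθq⟩ := hθmem
    have hθexp : (gl ν (a + θ) - gl ν a) + (gl ν b - gl ν (b - q + θ))
        = (gl ν b - gl ν a) / ((n:ℝ) + 2) := by
      rw [hhdef] at hθeq; simpa using hθeq
    have haa' : a ≤ a + θ := by linarith
    have hb'b : b - q + θ ≤ b := by linarith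
    have ha'b' : a + θ ≤ b - q + θ := by linarith [hqr]
    have ha'0 : (0:ℝ) ≤ a + θ := by linarith
    have hb'p : b - q + θ ≤ pt ν := hb'b.trans hbp
    have ha'p : a + θ ≤ pt ν := ha'b'.trans hb'p
    set B0 : Set ℝ := (Sl ν (a+θ) \ Sl ν a) ∪ (T \ Sl ν (b - q + θ)) with hB0def
    have hB0m : MeasurableSet B0 :=
      ((Sl_meas ν _).diff (Sl_meas ν _)).union (hTm.diff (Sl_meas ν _))
    have hSb'T : Sl ν (b - q + θ) ⊆ T := (Sl_mono ν hb'b).trans hST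
    have hdisj : Disjoint (Sl ν (a+θ) \ Sl ν a) (T \ Sl ν (b-q+θ)) := by
      apply Set.disjoint_left.2
      intro x hx1 hx2
      exact hx2.2 (Sl_mono ν ha'b' hx1.1)
    have hm1 : ν (Sl ν (a+θ) \ Sl ν a) = ENNReal.ofReal θ := by
      rw [measure_diff (Sl_mono ν haa') (Sl_meas ν a).nullMeasurableSet (measure_ne_top _ _),
        Sl_measure_eq ν hna ha'0 ha'p, Sl_measure_eq ν hna ha (hab.trans hbp),
        ← ENNReal.ofReal_sub _ ha]
      congr 1; ring
    have hm2 : ν (T \ Sl ν (b-q+θ)) = ENNReal.ofReal (q - θ) := by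
      rw [measure_diff hSb'T (Sl_meas _ _).nullMeasurableSet (measure_ne_top _ _), hνT,
        Sl_measure_eq ν hna (ha.trans hab) hbp, Sl_measure_eq ν hna (by linarith) hb'p,
        ← ENNReal.ofReal_sub _ (by linarith)]
      congr 1; ring
    have hB0meas : ν B0 = ENNReal.ofReal q := by
      rw [hB0def, measure_union hdisj (hTm.diff (Sl_meas _ _)), hm1, hm2,
        ← ENNReal.ofReal_add hθ0 (by linarith)]
      congr 1; ring
    have hB0int : ∫ x in B0, x ∂ν = (gl ν b - gl ν a) / ((n:ℝ) + 2) := by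
      rw [hB0def, setIntegral_union hdisj (hTm.diff (Sl_meas _ _)) hi.integrableOn
        hi.integrableOn, int_diff ν hi (Sl_meas _ _) (Sl_meas _ _) (Sl_mono ν haa'),
        int_diff ν hi (Sl_meas _ _) hTm hSb'T, hTb]
      have e1 : (∫ x in Sl ν (a+θ), x ∂ν) = gl ν (a+θ) := rfl
      have e2 : (∫ x in Sl ν a, x ∂ν) = gl ν a := rfl
      have e3 : (∫ x in Sl ν (b-q+θ), x ∂ν) = gl ν (b-q+θ) := rfl
      rw [e1, e2, e3]
      linarith [hθexp]
    obtain ⟨B', hB'm, hB'disj, hB'union, hB'meas, hB'int⟩ :=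
      IH (a+θ) (b-q+θ) (Sl ν (b-q+θ)) ha'0 ha'b' hb'p (Sl_meas ν _) subset_rfl rfl
    have hrel : gl ν (b-q+θ) - gl ν (a+θ) = (gl ν b - gl ν a) - (gl ν b - gl ν a)/((n:ℝ)+2) := by
      linarith [hθexp]
    have hsubB' : ∀ j, B' j ⊆ Sl ν (b-q+θ) \ Sl ν (a+θ) := by
      intro j; rw [← hB'union]; exact subset_iUnion B' j
    have hd0 : ∀ j, Disjoint B0 (B' j) := by
      intro j
      refine Disjoint.mono_right (hsubB' j) ?_
      rw [hB0def]
      apply disjoint_union_left.2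
      constructor
      · apply Set.disjoint_left.2; intro x hx1 hx2; exact hx2.2 hx1.1
      · apply Set.disjoint_left.2; intro x hx1 hx2; exact hx1.2 hx2.1
    refine ⟨Fin.cons B0 B', ?_, ?_, ?_, ?_, ?_⟩
    · intro j
      refine Fin.cases ?_ ?_ j
      · simpa [Fin.cons_zero] using hB0m
      · intro i; simpa [Fin.cons_succ] using hB'm i
    · intro i j hij
      rcases Fin.eq_zero_or_eq_succ i with rfl | ⟨i', rfl⟩
      · rcases Fin.eq_zero_or_eq_succ j with rfl | ⟨j', rfl⟩
        · exact absurd rfl hij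
        · simpa [Fin.cons_zero, Fin.cons_succ] using hd0 j'
      · rcases Fin.eq_zero_or_eq_succ j with rfl | ⟨j', rfl⟩
        · simpa [Fin.cons_zero, Fin.cons_succ] using (hd0 i').symm
        · have hij' : i' ≠ j' := fun hc => hij (by rw [hc])
          simpa [Fin.cons_succ] using hB'disj hij'
    · have hcu : (⋃ j, (Fin.cons B0 B' : Fin (n+1+1) → Set ℝ) j) = B0 ∪ ⋃ j, B' j := by
        ext x
        simp only [mem_iUnion, mem_union, Fin.exists_fin_succ, Fin.cons_zero, Fin.cons_succ]
      rw [hcu, hB'union, hB0def]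
      have c1 : Sl ν a ⊆ Sl ν (a+θ) := Sl_mono ν haa'
      have c2 : Sl ν (a+θ) ⊆ Sl ν (b-q+θ) := Sl_mono ν ha'b'
      ext x
      simp only [mem_union, mem_diff]
      constructor
      · rintro ((⟨h1, h2⟩ | ⟨h1, h2⟩) | ⟨h1, h2⟩)
        · exact ⟨hSb'T (c2 h1), h2⟩
        · exact ⟨h1, fun hc => h2 (c2 (c1 hc))⟩
        · exact ⟨hSb'T h1, fun hc => h2 (c1 hc)⟩
      · rintro ⟨hT, hnotin⟩
        by_cases h1 : x ∈ Sl ν (a+θ)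
        · exact Or.inl (Or.inl ⟨h1, hnotin⟩)
        by_cases h2 : x ∈ Sl ν (b-q+θ)
        · exact Or.inr ⟨h2, h1⟩
        · exact Or.inl (Or.inr ⟨hT, h2⟩)
    · intro j
      refine Fin.cases ?_ ?_ j
      · rw [Fin.cons_zero, hB0meas, hqdef]
        congr 1
        push_cast
        ring
      · intro i
        rw [Fin.cons_succ, hB'meas i]
        congr 1
        have e1 : b - q + θ - (a + θ) = (b - a) - q := by ring
        rw [e1, hqdef]
        push_cast
        field_simp
        ring
    · intro j
      refine Fin.cases ?_ ?_ j
      · rw [Fin.cons_zero, hB0int]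
        push_cast
        ring
      · intro i
        rw [Fin.cons_succ, hB'int i, hrel]
        push_cast
        field_simp
        ring
  
end EqSplit
/-- the event `D₀ = {X < μ_b}` can be split into `m+1` measurable pieces of
equal probability and equal contribution to the expectation. -/
theorem exists_equal_split {Ω : Type*} [MeasurableSpace Ω] (P : Measure Ω)
    [IsProbabilityMeasure P] (X : Ω → ℝ) (hXm : Measurable X) (hXi : Integrable X P)
    (hna : ∀ r : ℝ, P (X ⁻¹' {r}) = 0)
    (μb : ℝ) (hD0 : 0 < P {ω | X ω < μb}) (m : ℕ) :
    ∃ Dp : Fin (m + 1) → Set Ω,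
      (∀ j, MeasurableSet (Dp j)) ∧
      (Pairwise fun i j => Disjoint (Dp i) (Dp j)) ∧
      (⋃ j, Dp j) = {ω | X ω < μb} ∧
      (∀ j, P (Dp j) = P {ω | X ω < μb} / ((m : ℝ≥0∞) + 1)) ∧
      (∀ j, (∫ ω in Dp j, X ω ∂P) = (∫ ω in {ω | X ω < μb}, X ω ∂P) / (m + 1)) := by
  classical
  set D : Set Ω := {ω | X ω < μb} with hDdef
  have hDeq : D = X ⁻¹' (Set.Iio μb) := rfl
  have hDm : MeasurableSet D := hXm measurableSet_Iio
  set ν : Measure ℝ := Measure.map X (P.restrict D) with hνdef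
  haveI : IsFiniteMeasure ν := by
    rw [hνdef]; exact Measure.isFiniteMeasure_map _ _
  have hmap : ∀ s : Set ℝ, MeasurableSet s → ν s = P (X ⁻¹' s ∩ D) := by
    intro s hs
    rw [hνdef, Measure.map_apply hXm hs, Measure.restrict_apply (hXm hs)]
  have hi : Integrable (fun x : ℝ => x) ν := by
    rw [hνdef]
    exact (integrable_map_measure aestronglyMeasurable_id hXm.aemeasurable).2 hXi.restrict
  have hna' : ∀ r : ℝ, ν {r} = 0 := by
    intro r
    rw [hmap {r} (measurableSet_singleton r)]
    exact measure_mono_null Set.inter_subset_left (hna r)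
  have hνuniv : ν Set.univ = P D := by
    rw [hmap _ MeasurableSet.univ]
    simp
  have hc : ν (Set.Iio μb) = ν Set.univ := by
    rw [hmap _ measurableSet_Iio, hνuniv, ← hDeq]
    rw [Set.inter_self]
  have hFμb : EqSplit.Fc ν μb = EqSplit.pt ν := by
    rw [EqSplit.Fc, EqSplit.pt, hc]
  have hpt0 : (0:ℝ) ≤ EqSplit.pt ν := ENNReal.toReal_nonneg
  have hSp : EqSplit.Sl ν (EqSplit.pt ν) ⊆ Set.Iio μb := by
    intro x hx
    have hlt : EqSplit.Fc ν x < EqSplit.Fc ν μb := by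
      rw [hFμb]; exact hx
    exact (EqSplit.Fc_mono ν).reflect_lt hlt
  have hνT : ν (Set.Iio μb) = ν (EqSplit.Sl ν (EqSplit.pt ν)) := by
    rw [EqSplit.Sl_measure_eq ν hna' hpt0 (le_refl (EqSplit.pt ν)), hc, EqSplit.pt,
      ENNReal.ofReal_toReal (measure_ne_top _ _)]
  obtain ⟨B, hBm, hBdisj, hBunion, hBmeas, hBint⟩ :=
    EqSplit.split ν hi hna' m 0 (EqSplit.pt ν) (Set.Iio μb) le_rfl hpt0
      (le_refl (EqSplit.pt ν)) measurableSet_Iio hSp hνT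
  have hS0 : EqSplit.Sl ν 0 = ∅ := EqSplit.Sl_nonpos ν le_rfl
  rw [hS0, Set.diff_empty] at hBunion
  have hgl0 : EqSplit.gl ν 0 = 0 := by
    rw [EqSplit.gl, hS0]
    simp
  have hBsub : ∀ j, B j ⊆ Set.Iio μb := by
    intro j x hx
    have hm : x ∈ ⋃ j, B j := Set.mem_iUnion.2 ⟨j, hx⟩
    rw [hBunion] at hm
    exact hm
  have hpre : ∀ j, X ⁻¹' B j ⊆ D := by
    intro j x hx
    exact hBsub j hx
  have hPB : ∀ j, P (X ⁻¹' B j) = ν (B j) := by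
    intro j
    rw [hmap _ (hBm j), Set.inter_eq_self_of_subset_left (hpre j)]
  have hPD : P D = ENNReal.ofReal (EqSplit.pt ν) := by
    rw [EqSplit.pt, hνuniv, ENNReal.ofReal_toReal (measure_ne_top _ _)]
  have hIB : ∀ j, (∫ ω in X ⁻¹' B j, X ω ∂P) = ∫ x in B j, x ∂ν := by
    intro j
    have h1 : ∫ x in B j, x ∂ν = ∫ ω in X ⁻¹' B j, X ω ∂(P.restrict D) := by
      rw [hνdef]
      exact setIntegral_map (hBm j) aestronglyMeasurable_id hXm.aemeasurable
    have h2 : X ⁻¹' B j ∩ D = X ⁻¹' B j := Set.inter_eq_self_of_subset_left (hpre j)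
    rw [h1, Measure.restrict_restrict (hXm (hBm j)), h2]
  have hnull : ν (Set.Iio μb \ EqSplit.Sl ν (EqSplit.pt ν)) = 0 := by
    rw [measure_diff hSp (EqSplit.Sl_meas ν _).nullMeasurableSet (measure_ne_top _ _), hνT,
      tsub_self]
  have hIioint : ∫ x in Set.Iio μb, x ∂ν = EqSplit.gl ν (EqSplit.pt ν) := by
    have h1 := EqSplit.int_diff ν hi (EqSplit.Sl_meas ν _) measurableSet_Iio hSp
    rw [setIntegral_measure_zero _ hnull] at h1
    have h2 : EqSplit.gl ν (EqSplit.pt ν) = ∫ x in EqSplit.Sl ν (EqSplit.pt ν), x ∂ν := rfl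
    linarith
  have hID : (∫ ω in D, X ω ∂P) = ∫ x in Set.Iio μb, x ∂ν := by
    have h1 : ∫ x in Set.Iio μb, x ∂ν = ∫ ω in X ⁻¹' (Set.Iio μb), X ω ∂(P.restrict D) := by
      rw [hνdef]
      exact setIntegral_map measurableSet_Iio aestronglyMeasurable_id hXm.aemeasurable
    have h2 : X ⁻¹' (Set.Iio μb) ∩ D = D := by
      rw [← hDeq, Set.inter_self]
    rw [h1, Measure.restrict_restrict (hXm measurableSet_Iio), h2]
  refine ⟨fun j => X ⁻¹' (B j), fun j => hXm (hBm j), ?_, ?_, ?_, ?_⟩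
  · intro i j hij
    exact (hBdisj hij).preimage X
  · rw [← Set.preimage_iUnion, hBunion]
    exact hDeq.symm
  · intro j
    rw [hPB j, hBmeas j, hPD]
    rw [sub_zero]
    rw [ENNReal.ofReal_div_of_pos (by positivity : (0:ℝ) < (m:ℝ) + 1)]
    congr 1
    rw [ENNReal.ofReal_add (by positivity) zero_le_one]
    simp [ENNReal.ofReal_natCast, ENNReal.ofReal_one]
  · intro j
    rw [hIB j, hBint j, hID, hIioint, hgl0, sub_zero]
end

section
/- Let X be an integrable real-valued random variable on a probability space, and let x and μ_b be real numbers with P(X < x) > 0 and E[X | X < x] > μ_b. Then there is no sequence (W_n)_{n ∈ ℕ} of Borel-measurable subsets of ℝ satisfying both: (i) {ω : X(ω) < x} ⊆ {ω : X(ω) ∈ ⋃_n W_n}, and (ii) for every n such that P(X ∈ W_n \ ⋃_{j<n} W_j) > 0, E[X | X ∈ W_n \ ⋃_{j<n} W_j] ≤ μ_b. (This is the core of the impossibility result for full-visibility networks: no incentive-compatible asymptotically efficient recommendation scheme can assign to each agent n a trigger set W_n of values of V_a on which it is the first to be recommended the unexplored action b, in such a way that the trigger sets cover all values below the essential supremum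 x of V_b, while each agent's conditional expectation of V_a given its trigger event is at most μ_b = E[V_b].) -/
open MeasureTheory

/-- the impossibility result for full-visibility networks. There is no
sequence `(W n)` of Borel trigger sets covering all values below `x` such that the
conditional expectation of `X` given each "first trigger" event is at most `μ_b`. -/
theorem no_trigger_sets {Ω : Type*} [MeasurableSpace Ω] (P : Measure Ω)
    [IsProbabilityMeasure P] (X : Ω → ℝ) (hXm : Measurable X) (hXi : Integrable X P)
    (x μb : ℝ) (hx : 0 < P {ω | X ω < x})
    (hgt : μb < condExpSet P X {ω | X ω < x}) :
    ¬ ∃ W : ℕ → Set ℝ,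
      (∀ n, MeasurableSet (W n)) ∧
      ({ω | X ω < x} ⊆ {ω | X ω ∈ ⋃ n, W n}) ∧
      (∀ n, 0 < P {ω | X ω ∈ W n \ ⋃ j, ⋃ (_ : j < n), W j} →
        condExpSet P X {ω | X ω ∈ W n \ ⋃ j, ⋃ (_ : j < n), W j} ≤ μb) := by
  rintro ⟨W, hWm, hcov, hle⟩
  set A : ℕ → Set Ω := fun n => X ⁻¹' disjointed W n with hA
  have hDeq : ∀ n, {ω | X ω ∈ W n \ ⋃ j, ⋃ (_ : j < n), W j} = A n := by
    intro n
    ext ω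
    simp only [hA, Set.mem_setOf_eq, Set.mem_preimage, disjointed_eq_inter_compl,
      Set.mem_diff, Set.mem_iUnion, Set.mem_inter_iff, Set.mem_iInter, Set.mem_compl_iff]
    exact ⟨fun ⟨h1, h2⟩ => ⟨h1, fun i hi hm => h2 ⟨i, hi, hm⟩⟩,
      fun ⟨h1, h2⟩ => ⟨h1, fun ⟨i, hi, hm⟩ => h2 i hi hm⟩⟩
  have hAm : ∀ n, MeasurableSet (A n) := fun n => hXm (MeasurableSet.disjointed hWm n)
  have hAdisj : Pairwise (Function.onFun Disjoint A) := fun i j hij =>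
    (disjoint_disjointed W hij).preimage X
  set U : Set Ω := ⋃ n, A n with hU
  have hUm : MeasurableSet U := MeasurableSet.iUnion hAm
  have hUeq : U = X ⁻¹' ⋃ n, W n := by
    rw [hU]; simp only [hA, ← Set.preimage_iUnion, iUnion_disjointed]
  set B : Set Ω := {ω | X ω < x} with hB
  have hBm : MeasurableSet B := hXm measurableSet_Iio
  have hBU : B ⊆ U := by rw [hUeq]; exact hcov
  have hPBfin : P B ≠ ⊤ := measure_ne_top P B
  have hPBpos : 0 < (P B).toReal := ENNReal.toReal_pos hx.ne' hPBfin
  -- integral over B is > μb * P B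
  have hBgt : μb * (P B).toReal < ∫ ω in B, X ω ∂P := by
    have := hgt
    rw [condExpSet, lt_div_iff₀ hPBpos] at this
    exact this
  -- X < x on B gives ∫_B X ≤ x * P B, hence μb < x
  have hBle : ∫ ω in B, X ω ∂P ≤ x * (P B).toReal := by
    calc ∫ ω in B, X ω ∂P ≤ ∫ _ in B, x ∂P :=
          setIntegral_mono_on hXi.integrableOn (integrableOn_const hPBfin)
            hBm (fun ω hω => le_of_lt hω)
      _ = x * (P B).toReal := by rw [setIntegral_const, smul_eq_mul, mul_comm, measureReal_def]
  have hμx : μb < x := by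
    have h1 : μb * (P B).toReal < x * (P B).toReal := lt_of_lt_of_le hBgt hBle
    exact lt_of_mul_lt_mul_right h1 hPBpos.le
  -- each piece has integral ≤ μb * P (A n)
  have hpiece : ∀ n, ∫ ω in A n, X ω ∂P ≤ μb * (P (A n)).toReal := by
    intro n
    rcases eq_or_lt_of_le (show (0 : ENNReal) ≤ P (A n) from zero_le) with h0 | hpos
    · simp [Measure.restrict_eq_zero.2 h0.symm, ← h0]
    · have := hle n (by rwa [hDeq n])
      rw [hDeq n, condExpSet, div_le_iff₀ (ENNReal.toReal_pos hpos.ne' (measure_ne_top P _))]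
        at this
      linarith [this]
  -- sum over pieces
  have hsum : HasSum (fun n => ∫ ω in A n, X ω ∂P) (∫ ω in U, X ω ∂P) :=
    hasSum_integral_iUnion hAm hAdisj hXi.integrableOn
  have hPU : ∑' n, P (A n) = P U := (measure_iUnion hAdisj hAm).symm
  have hPUt : ∑' n, (P (A n)).toReal = (P U).toReal := by
    rw [← ENNReal.tsum_toReal_eq (fun n => measure_ne_top P _), hPU]
  have hSsum : Summable (fun n => (P (A n)).toReal) :=
    ENNReal.summable_toReal (by rw [hPU]; exact measure_ne_top P U)
  have hUle : ∫ ω in U, X ω ∂P ≤ μb * (P U).toReal := by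
    calc ∫ ω in U, X ω ∂P = ∑' n, ∫ ω in A n, X ω ∂P := hsum.tsum_eq.symm
      _ ≤ ∑' n, μb * (P (A n)).toReal :=
          hsum.summable.tsum_le_tsum hpiece (hSsum.mul_left μb)
      _ = μb * (P U).toReal := by rw [tsum_mul_left, hPUt]
  -- lower bound: split U into B and U \ B
  have hsplit : ∫ ω in U, X ω ∂P = (∫ ω in B, X ω ∂P) + ∫ ω in U \ B, X ω ∂P := by
    rw [← setIntegral_union disjoint_sdiff_self_right (hUm.diff hBm) hXi.integrableOn
      hXi.integrableOn, Set.union_diff_cancel hBU]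
  have hdiff_ge : μb * (P (U \ B)).toReal ≤ ∫ ω in U \ B, X ω ∂P := by
    calc μb * (P (U \ B)).toReal ≤ x * (P (U \ B)).toReal := by
          have := ENNReal.toReal_nonneg (a := P (U \ B))
          nlinarith
      _ = ∫ _ in U \ B, x ∂P := by rw [setIntegral_const, smul_eq_mul, mul_comm, measureReal_def]
      _ ≤ ∫ ω in U \ B, X ω ∂P :=
          setIntegral_mono_on (integrableOn_const (measure_ne_top P _))
            hXi.integrableOn (hUm.diff hBm) (fun ω hω => not_lt.1 hω.2)
  have hPadd : (P B).toReal + (P (U \ B)).toReal = (P U).toReal := by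
    rw [← ENNReal.toReal_add hPBfin (measure_ne_top P _),
      measure_add_diff hBm.nullMeasurableSet U, Set.union_eq_self_of_subset_left hBU]
  have hkey : μb * (P U).toReal = μb * (P B).toReal + μb * (P (U \ B)).toReal := by
    rw [← hPadd]; ring
  linarith
end
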